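/- arXiv:1902.04381 — 6 statements merged into one kernel-verified Lean document; each statement's English description precedes it below -/
import Mathlib

section
/- Let ℤ_q = W(𝔽_q) be the ring of Witt vectors of 𝔽_q. If f, g : ℤ_q → ℤ_q are ring homomorphisms such that f(x) ≡ g(x) (mod p) for all x ∈ ℤ_q, then f = g. -/
section aux

variable {p : ℕ} [Fact p.Prime] {k : Type*} [CommRing k] [CharP k p] [PerfectRing k p]

/-- Any Witt vector with vanishing zeroth coefficient is divisible by `p`. -/
lemma aux_dvd_of_coeff_zero (d : WittVector p k) (hd : d.coeff 0 = 0) :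
    ∃ b : WittVector p k, d = (p : WittVector p k) * b := by
  rcases eq_or_ne d 0 with rfl | hne
  · exact ⟨0, by ring⟩
  · obtain ⟨m, x', hx', hdx⟩ := WittVector.verschiebung_nonzero hne
    cases m with
    | zero => simp only [Function.iterate_zero, id] at hdx; rw [hdx] at hd; exact (hx' hd).elim
    | succ m =>
      obtain ⟨b, hb⟩ := (WittVector.frobenius_bijective p k).surjective
        (WittVector.verschiebung^[m] x')
      refine ⟨b, ?_⟩
      rw [hdx, Function.iterate_succ_apply', ← hb, WittVector.verschiebung_frobenius, mul_comm]

/-- Every Witt vector over a perfect ring is a `p`-th power plus `p` times something. -/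
lemma aux_exists_pow_add (x : WittVector p k) :
    ∃ y z : WittVector p k, x = y ^ p + (p : WittVector p k) * z := by
  set y : WittVector p k := WittVector.teichmuller p ((frobeniusEquiv k p).symm (x.coeff 0))
  have hy : y ^ p = WittVector.teichmuller p (x.coeff 0) := by
    rw [← map_pow]
    congr 1
    have := (frobeniusEquiv k p).apply_symm_apply (x.coeff 0)
    rwa [frobeniusEquiv_apply, frobenius_def] at this
  have hcoeff : (x - y ^ p).coeff 0 = 0 := by
    have : (x - y ^ p).coeff 0 = x.coeff 0 - (y ^ p).coeff 0 := by
      have := map_sub (WittVector.constantCoeff : WittVector p k →+* k) x (y ^ p)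
      simpa [WittVector.constantCoeff_apply] using this
    rw [this, hy, WittVector.teichmuller_coeff_zero, sub_self]
  obtain ⟨z, hz⟩ := aux_dvd_of_coeff_zero (x - y ^ p) hcoeff
  exact ⟨y, z, by linear_combination hz⟩

end aux

set_option synthInstance.maxHeartbeats 1000000 in
set_option maxHeartbeats 1000000 in
/-- If two ring endomorphisms of `ℤ_q = W(𝔽_q)` agree modulo `p`, they are equal. -/
theorem stmt1 (p n : ℕ) [Fact p.Prime] (hn : 0 < n)
    (f g : WittVector p (GaloisField p n) →+* WittVector p (GaloisField p n))
    (h : ∀ x, f x - g x ∈ Ideal.span {(p : WittVector p (GaloisField p n))}) :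
    f = g := by
  set I : Ideal (WittVector p (GaloisField p n)) :=
    Ideal.span {(p : WittVector p (GaloisField p n))} with hI
  -- congruence improves: f x - g x ∈ I ^ (k+1) for all k
  have key : ∀ m : ℕ, ∀ x : WittVector p (GaloisField p n), f x - g x ∈ I ^ (m + 1) := by
    intro m
    induction m with
    | zero => intro x; simpa using h x
    | succ m ih =>
      intro x
      obtain ⟨y, z, rfl⟩ := aux_exists_pow_add x
      have hfg : f (y ^ p + (p : WittVector p (GaloisField p n)) * z) - g (y ^ p + (p : WittVector p (GaloisField p n)) * z)
          = (f y ^ p - g y ^ p) + (p : WittVector p (GaloisField p n)) * (f z - g z) := by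
        simp only [map_add, map_mul, map_pow, map_natCast]
        ring
      rw [hfg]
      have hpI : (p : WittVector p (GaloisField p n)) ∈ I := Ideal.mem_span_singleton_self _
      have h1 : f y ^ p - g y ^ p ∈ I ^ (m + 2) := by
        have hsum : (∑ i ∈ Finset.range p, f y ^ i * g y ^ (p - 1 - i)) ∈ I := by
          have hyI : f y - g y ∈ I := by
            have := ih y
            have hle : I ^ (m + 1) ≤ I ^ 1 := Ideal.pow_le_pow_right (by omega)
            simpa using hle this
          -- work modulo I
          have hq : Ideal.Quotient.mk I (f y) = Ideal.Quotient.mk I (g y) := by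
            rwa [Ideal.Quotient.mk_eq_mk_iff_sub_mem]
          rw [← Ideal.Quotient.eq_zero_iff_mem,
            map_sum (Ideal.Quotient.mk I) (fun i => f y ^ i * g y ^ (p - 1 - i))
              (Finset.range p)]
          have : ∀ i ∈ Finset.range p,
              Ideal.Quotient.mk I (f y ^ i * g y ^ (p - 1 - i))
                = Ideal.Quotient.mk I (g y) ^ (p - 1) := by
            intro i hi
            rw [map_mul, map_pow, map_pow, hq, ← pow_add]
            congr 1
            have := Finset.mem_range.mp hi
            omega
          rw [Finset.sum_congr rfl this, Finset.sum_const, Finset.card_range, nsmul_eq_mul]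
          have hp0 : (p : WittVector p (GaloisField p n) ⧸ I) = 0 := by
            rw [← map_natCast (Ideal.Quotient.mk I), Ideal.Quotient.eq_zero_iff_mem]
            exact hpI
          rw [hp0, zero_mul]
        have hmul : (∑ i ∈ Finset.range p, f y ^ i * g y ^ (p - 1 - i)) * (f y - g y)
            = f y ^ p - g y ^ p := geom_sum₂_mul _ _ _
        have hmem := Ideal.mul_mem_mul hsum (ih y)
        rw [hmul, ← pow_succ'] at hmem
        exact hmem
      have h2 : (p : WittVector p (GaloisField p n)) * (f z - g z) ∈ I ^ (m + 2) := by
        have : (p : WittVector p (GaloisField p n)) * (f z - g z) ∈ I * I ^ (m + 1) := Ideal.mul_mem_mul hpI (ih z)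
        rwa [← pow_succ'] at this
      exact Ideal.add_mem _ h1 h2
  -- the intersection of powers of I is zero
  haveI : IsDiscreteValuationRing (WittVector p (GaloisField p n)) :=
    WittVector.isDiscreteValuationRing
  haveI : IsNoetherianRing (WittVector p (GaloisField p n)) :=
    PrincipalIdealRing.isNoetherianRing
  have hInotTop : I ≠ ⊤ := by
    rw [Ne, Ideal.span_singleton_eq_top]
    exact (WittVector.irreducible p).not_isUnit
  have hbot : (⨅ i : ℕ, I ^ i) = ⊥ := Ideal.iInf_pow_eq_bot_of_isDomain (I := I) hInotTop
  refine RingHom.ext fun x => ?_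
  have hx : f x - g x ∈ (⨅ i : ℕ, I ^ i) := by
    rw [Submodule.mem_iInf]
    intro i
    cases i with
    | zero => simp
    | succ i => exact key i x
  rw [hbot, Submodule.mem_bot] at hx
  exact sub_eq_zero.mp hx
end

section
/- Let q = p^n. Consider the ring homomorphism Θ : ℤ_q[𝔽_q^×] → 𝔽_q ⊗_{𝔽_p} 𝔽_q sending z·[λ] to λ ⊗ z̄, where z̄ is the reduction of z ∈ ℤ_q modulo p. For k ∈ {0, ..., n−1}, the image Θ(e_{p^k}) of the idempotent e_{p^k} = (q−1)^{-1} Σ_λ χ(λ)^{−p^k} [λ] is the primitive idempotent of 𝔽_q ⊗_{𝔽_p} 𝔽_q corresponding, under the isomorphism 𝔽_q ⊗_{𝔽_p} 𝔽_q ≅ ∏_{l=0}^{n−1} 𝔽_q given by x ⊗ y ↦ (x^{p^l} y)_l, to the standard idempotent of the k-th factor. -/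
open TensorProduct

/-- The isotypic idempotent `e_m = (q-1)⁻¹ ∑_{λ ∈ 𝔽_q^×} χ(λ)^{-m} [λ]` in the group
algebra `R[𝔽_q^×]`, where `χ` is a character `𝔽_q^× → ℤ_q^×` and `v = (q-1)⁻¹ ∈ R`. -/
noncomputable def raynaudIdem (p n : ℕ) [Fact p.Prime] (R : Type*) [CommRing R]
    [Algebra (WittVector p (GaloisField p n)) R]
    (χ : (GaloisField p n)ˣ →* (WittVector p (GaloisField p n))ˣ) (v : R) (m : ℤ) :
    MonoidAlgebra R (GaloisField p n)ˣ :=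
  ∑ᶠ lam : (GaloisField p n)ˣ,
    MonoidAlgebra.single lam
      (v * algebraMap (WittVector p (GaloisField p n)) R
        ((χ lam ^ (-m) : (WittVector p (GaloisField p n))ˣ) : WittVector p (GaloisField p n)))

/-- Under the map `Θ : ℤ_q[𝔽_q^×] → 𝔽_q ⊗_{𝔽_p} 𝔽_q`, `z·[λ] ↦ λ ⊗ z̄`, the idempotent
`e_{p^k}` is sent to the primitive idempotent corresponding, under the isomorphism
`𝔽_q ⊗_{𝔽_p} 𝔽_q ≅ ∏_l 𝔽_q`, `x ⊗ y ↦ (x^{p^l} y)_l`, to the standard idempotent of the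
`k`-th factor. -/
theorem stmt5 (p n : ℕ) [Fact p.Prime] (hn : 0 < n)
    (χ : (GaloisField p n)ˣ →* (WittVector p (GaloisField p n))ˣ)
    (hχ : ∀ x : (GaloisField p n)ˣ,
      WittVector.ghostComponent 0 ((χ x : (WittVector p (GaloisField p n))ˣ) :
        WittVector p (GaloisField p n)) = (x : GaloisField p n))
    (v : WittVector p (GaloisField p n))
    (hv : v * ((p ^ n - 1 : ℕ) : WittVector p (GaloisField p n)) = 1)
    (e : (GaloisField p n ⊗[ZMod p] GaloisField p n) ≃+* (Fin n → GaloisField p n))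
    (he : ∀ x y : GaloisField p n,
      e (x ⊗ₜ[ZMod p] y) = fun l : Fin n => x ^ p ^ (l : ℕ) * y)
    (Θ : MonoidAlgebra (WittVector p (GaloisField p n)) (GaloisField p n)ˣ →+*
      (GaloisField p n ⊗[ZMod p] GaloisField p n))
    (hΘ : ∀ (lam : (GaloisField p n)ˣ) (z : WittVector p (GaloisField p n)),
      Θ (MonoidAlgebra.single lam z) =
        ((lam : GaloisField p n) ⊗ₜ[ZMod p] (WittVector.ghostComponent 0 z))) :
    ∀ k : Fin n,
      e (Θ (raynaudIdem p n (WittVector p (GaloisField p n)) χ v ((p : ℤ) ^ (k : ℕ)))) =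
        Pi.single k 1 := by
  classical
  intro k
  haveI : Fintype (GaloisField p n) := Fintype.ofFinite _
  have hp1 : 1 < p := (Fact.out : p.Prime).one_lt
  have hcardu : Fintype.card (GaloisField p n)ˣ = p ^ n - 1 := by
    rw [Fintype.card_units, ← Nat.card_eq_fintype_card, GaloisField.card p n hn.ne']
  have hcast : ((p ^ n - 1 : ℕ) : GaloisField p n) = -1 := by
    have h1 : (1:ℕ) ≤ p ^ n := Nat.one_le_pow _ _ (Fact.out : p.Prime).pos
    push_cast [h1]
    rw [show ((p : GaloisField p n)) = 0 from CharP.cast_eq_zero _ p, zero_pow hn.ne']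
    ring
  -- ghost component of v is -1
  have hg0v : WittVector.ghostComponent 0 v = -1 := by
    have hv' := congrArg (WittVector.ghostComponent (p := p) 0) hv
    rw [map_mul, map_natCast, map_one, hcast] at hv'
    linear_combination -hv'
  -- ghost component of unit powers of χ
  have hunit : ∀ (lam : (GaloisField p n)ˣ) (z : ℤ),
      WittVector.ghostComponent 0
        ((χ lam ^ z : (WittVector p (GaloisField p n))ˣ) : WittVector p (GaloisField p n))
        = ((lam ^ z : (GaloisField p n)ˣ) : GaloisField p n) := by
    intro lam z
    have h1 : Units.map (WittVector.ghostComponent (p := p) 0 :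
        WittVector p (GaloisField p n) →+* GaloisField p n).toMonoidHom (χ lam) = lam :=
      Units.ext (hχ lam)
    calc WittVector.ghostComponent 0 ((χ lam ^ z : (WittVector p (GaloisField p n))ˣ) :
          WittVector p (GaloisField p n))
        = ((Units.map (WittVector.ghostComponent (p := p) 0 :
            WittVector p (GaloisField p n) →+* GaloisField p n).toMonoidHom (χ lam ^ z) :
            (GaloisField p n)ˣ) : GaloisField p n) := rfl
      _ = ((lam ^ z : (GaloisField p n)ˣ) : GaloisField p n) := by rw [map_zpow, h1]
  -- compute Θ of the idempotent
  rw [raynaudIdem, finsum_eq_sum_of_fintype, map_sum, map_sum]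
  funext l
  rw [Finset.sum_apply]
  have hterm : ∀ lam : (GaloisField p n)ˣ,
      (e (Θ (MonoidAlgebra.single lam
        (v * algebraMap (WittVector p (GaloisField p n)) (WittVector p (GaloisField p n))
          ((χ lam ^ (-((p:ℤ) ^ (k:ℕ))) : (WittVector p (GaloisField p n))ˣ) :
            WittVector p (GaloisField p n)))))) l
      = -1 * ((lam ^ (((p ^ (l:ℕ) : ℕ) : ℤ) - (p:ℤ) ^ (k:ℕ)) : (GaloisField p n)ˣ) :
          GaloisField p n) := by
    intro lam
    rw [hΘ, he, map_mul]
    simp only [Algebra.algebraMap_self, RingHom.id_apply]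
    rw [hg0v, hunit]
    have h2 : ((lam : GaloisField p n)) ^ p ^ (l:ℕ)
        = ((lam ^ (((p ^ (l:ℕ) : ℕ)) : ℤ) : (GaloisField p n)ˣ) : GaloisField p n) := by
      rw [zpow_natCast, Units.val_pow_eq_pow_val]
    rw [h2, ← mul_assoc, mul_comm _ (-1 : GaloisField p n), mul_assoc, ← Units.val_mul,
      ← zpow_add, sub_eq_add_neg]
  rw [Finset.sum_congr rfl fun lam _ => hterm lam, ← Finset.mul_sum]
  set z : ℤ := ((p ^ (l:ℕ) : ℕ) : ℤ) - (p:ℤ) ^ (k:ℕ) with hz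
  by_cases hlk : l = k
  · subst hlk
    have hz0 : z = 0 := by rw [hz]; push_cast; ring
    rw [hz0]
    simp only [zpow_zero, Units.val_one]
    rw [Finset.sum_const, nsmul_eq_mul, mul_one, Finset.card_univ, hcardu, hcast, Pi.single_eq_same]
    ring
  · -- the homomorphism lam ↦ lam ^ z is nontrivial
    have hf : ((Units.coeHom (GaloisField p n)).comp (zpowGroupHom z) :
        (GaloisField p n)ˣ →* GaloisField p n) ≠ 1 := by
      intro hcontra
      obtain ⟨g, hg⟩ := IsCyclic.exists_generator (α := (GaloisField p n)ˣ)
      have horder : orderOf g = p ^ n - 1 := by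
        rw [orderOf_eq_card_of_forall_mem_zpowers hg, Nat.card_eq_fintype_card, hcardu]
      have hg1 : g ^ z = 1 := by
        have := congrFun (congrArg DFunLike.coe hcontra) g
        simp only [MonoidHom.comp_apply, zpowGroupHom_apply, Units.coeHom_apply,
          MonoidHom.one_apply] at this
        exact Units.ext this
      have hdvd : ((p ^ n - 1 : ℕ) : ℤ) ∣ z := by
        rw [← horder]
        exact_mod_cast orderOf_dvd_iff_zpow_eq_one.mpr hg1
      have hzne : z ≠ 0 := by
        rw [hz]
        have : (p:ℤ) ^ (l:ℕ) ≠ (p:ℤ) ^ (k:ℕ) := by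
          intro h
          exact hlk (Fin.ext (Nat.pow_right_injective hp1 (by exact_mod_cast h)))
        push_cast
        exact sub_ne_zero.mpr this
      have hbound : |z| < ((p ^ n - 1 : ℕ) : ℤ) := by
        have hpn1 : ((p ^ n - 1 : ℕ) : ℤ) = (p:ℤ) ^ n - 1 := by
          push_cast [Nat.one_le_pow _ _ (Fact.out : p.Prime).pos]; ring
        rw [hpn1, hz, abs_sub_lt_iff]
        have hl : (p:ℤ) ^ (l:ℕ) ≤ (p:ℤ) ^ (n - 1) :=
          pow_le_pow_right₀ (by exact_mod_cast hp1.le) (Nat.le_sub_one_of_lt l.isLt)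
        have hk : (p:ℤ) ^ (k:ℕ) ≤ (p:ℤ) ^ (n - 1) :=
          pow_le_pow_right₀ (by exact_mod_cast hp1.le) (Nat.le_sub_one_of_lt k.isLt)
        have hone : (1:ℤ) ≤ (p:ℤ) ^ (l:ℕ) := one_le_pow₀ (by exact_mod_cast hp1.le)
        have hone' : (1:ℤ) ≤ (p:ℤ) ^ (k:ℕ) := one_le_pow₀ (by exact_mod_cast hp1.le)
        have hlt : (p:ℤ) ^ (n - 1) < (p:ℤ) ^ n :=
          pow_lt_pow_right₀ (by exact_mod_cast hp1) (Nat.sub_lt hn one_pos)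
        push_cast
        constructor <;> linarith
      have := Int.le_of_dvd (abs_pos.mpr (by
        rw [hz]
        have : (p:ℤ) ^ (l:ℕ) ≠ (p:ℤ) ^ (k:ℕ) := by
          intro h
          exact hlk (Fin.ext (Nat.pow_right_injective hp1 (by exact_mod_cast h)))
        push_cast
        exact sub_ne_zero.mpr this)) ((dvd_abs _ _).mpr hdvd)
      omega
    have hsum : ∑ lam : (GaloisField p n)ˣ,
        ((lam ^ z : (GaloisField p n)ˣ) : GaloisField p n) = 0 := by
      have := sum_hom_units_eq_zero
        ((Units.coeHom (GaloisField p n)).comp (zpowGroupHom z)) hf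
      simpa using this
    rw [hsum, mul_zero]
    exact (Pi.single_eq_of_ne (M := fun _ : Fin n => GaloisField p n) hlk 1).symm
end

section
/- Let R be a commutative ring, n ≥ 1, p ≥ 2, and a_0, a_1, ..., a_{n−1} ∈ R (indices taken mod n). Define A := R[x_0, ..., x_{n−1}] / (x_0^p − a_1 x_1, x_1^p − a_2 x_2, ..., x_{n−2}^p − a_{n−1} x_{n−1}, x_{n−1}^p − a_0 x_0). Then A is a free R-module of rank p^n, with basis the images of the monomials x_0^{r_0} x_1^{r_1} ⋯ x_{n−1}^{r_{n−1}} for 0 ≤ r_k ≤ p−1. -/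
open Finset

namespace Stmt6Aux

variable {R : Type*} [CommRing R] {p n : ℕ} [NeZero n]

def casc (hp : 2 ≤ p) (a : Fin n → R) (k : Fin n) (r : Fin n → Fin p) :
    (Fin n → Fin p) × R :=
  if h : (r k : ℕ) + 1 < p then
    (Function.update r k ⟨(r k : ℕ) + 1, h⟩, 1)
  else
    let s := casc hp a (k + 1) (Function.update r k ⟨0, by omega⟩)
    (s.1, a (k + 1) * s.2)
termination_by (Finset.univ.filter fun j => (r j : ℕ) = p - 1).card
decreasing_by
  have hk : (r k : ℕ) = p - 1 := by have := (r k).isLt; omega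
  have hsub : (Finset.univ.filter fun j =>
      ((Function.update r k (⟨0, by omega⟩ : Fin p) j : Fin p) : ℕ) = p - 1)
      = (Finset.univ.filter fun j => (r j : ℕ) = p - 1).erase k := by
    ext j
    by_cases hj : j = k
    · subst hj
      simp [Function.update_self]
      omega
    · simp [Function.update_of_ne hj, hj]
  rw [hsub]
  exact Finset.card_erase_lt_of_mem (Finset.mem_filter.2 ⟨Finset.mem_univ _, hk⟩)

/-- `0` in `Fin p`. -/
def fz (hp : 2 ≤ p) : Fin p := ⟨0, by omega⟩

variable (hp : 2 ≤ p) (a : Fin n → R)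

lemma filter_update_card_lt {r : Fin n → Fin p} {k : Fin n} (hk : (r k : ℕ) = p - 1) :
    (Finset.univ.filter fun j => ((Function.update r k (fz hp) j : Fin p) : ℕ) = p - 1).card
      < (Finset.univ.filter fun j => (r j : ℕ) = p - 1).card := by
  have hsub : (Finset.univ.filter fun j =>
      ((Function.update r k (fz hp) j : Fin p) : ℕ) = p - 1)
      = (Finset.univ.filter fun j => (r j : ℕ) = p - 1).erase k := by
    ext j
    by_cases hj : j = k
    · subst hj
      simp [Function.update_self]
      show ¬ (0 : ℕ) = p - 1
      omega
    · simp [Function.update_of_ne hj, hj]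
  rw [hsub]
  exact Finset.card_erase_lt_of_mem (Finset.mem_filter.2 ⟨Finset.mem_univ _, hk⟩)

/-- Multiplication by `x_k` as a linear endomorphism of the free module on reduced exponents. -/
noncomputable def yop (k : Fin n) : Module.End R ((Fin n → Fin p) →₀ R) :=
  Finsupp.lsum R fun r => LinearMap.toSpanSingleton R _
    (Finsupp.single (casc hp a k r).1 (casc hp a k r).2)

lemma yop_single (k : Fin n) (r : Fin n → Fin p) (c : R) :
    yop hp a k (Finsupp.single r c)
      = Finsupp.single (casc hp a k r).1 (c * (casc hp a k r).2) := by
  simp [yop, LinearMap.toSpanSingleton_apply, Finsupp.smul_single]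

lemma casc_lt {k : Fin n} {r : Fin n → Fin p} (h : (r k : ℕ) + 1 < p) :
    casc hp a k r = (Function.update r k ⟨(r k : ℕ) + 1, h⟩, 1) := by
  rw [casc, dif_pos h]

lemma casc_eq {k : Fin n} {r : Fin n → Fin p} (h : (r k : ℕ) = p - 1) :
    casc hp a k r = ((casc hp a (k + 1) (Function.update r k (fz hp))).1,
      a (k + 1) * (casc hp a (k + 1) (Function.update r k (fz hp))).2) := by
  rw [casc, dif_neg (by omega)]
  rfl

lemma yop_single_lt {k : Fin n} {r : Fin n → Fin p} (h : (r k : ℕ) + 1 < p) (c : R) :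
    yop hp a k (Finsupp.single r c)
      = Finsupp.single (Function.update r k ⟨(r k : ℕ) + 1, h⟩) c := by
  rw [yop_single, casc_lt hp a h, mul_one]

lemma yop_single_eq {k : Fin n} {r : Fin n → Fin p} (h : (r k : ℕ) = p - 1) (c : R) :
    yop hp a k (Finsupp.single r c)
      = a (k + 1) • yop hp a (k + 1) (Finsupp.single (Function.update r k (fz hp)) c) := by
  rw [yop_single, casc_eq hp a h, yop_single, Finsupp.smul_single, smul_eq_mul,
    mul_left_comm]


lemma yop_comm_single : ∀ (N : ℕ) (r : Fin n → Fin p),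
    (Finset.univ.filter fun j => (r j : ℕ) = p - 1).card = N →
    ∀ j k : Fin n,
      yop hp a j (yop hp a k (Finsupp.single r (1 : R)))
        = yop hp a k (yop hp a j (Finsupp.single r 1)) := by
  intro N
  induction N using Nat.strong_induction_on with
  | _ N IH =>
    intro r hr j k
    have key : ∀ (r' : Fin n → Fin p),
        (Finset.univ.filter fun j => ((r' j : Fin p) : ℕ) = p - 1).card < N →
        ∀ j' k' : Fin n,
          yop hp a j' (yop hp a k' (Finsupp.single r' (1 : R)))
            = yop hp a k' (yop hp a j' (Finsupp.single r' 1)) := by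
      intro r' h
      exact IH _ h r' rfl
    by_cases hjk : j = k
    · subst hjk; rfl
    rcases lt_or_ge ((r k : ℕ) + 1) p with hk | hk
    · rcases lt_or_ge ((r j : ℕ) + 1) p with hj | hj
      · -- both increment
        rw [yop_single_lt hp a hk, yop_single_lt hp a hj]
        have h1 : ((Function.update r k ⟨(r k : ℕ) + 1, hk⟩ j : Fin p) : ℕ) + 1 < p := by
          rw [Function.update_of_ne hjk]; exact hj
        have h2 : ((Function.update r j ⟨(r j : ℕ) + 1, hj⟩ k : Fin p) : ℕ) + 1 < p := by
          rw [Function.update_of_ne (Ne.symm hjk)]; exact hk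
        rw [yop_single_lt hp a h1, yop_single_lt hp a h2]
        refine congrArg (fun z => Finsupp.single z (1 : R)) ?_
        funext i
        rcases eq_or_ne i j with rfl | hij <;> rcases eq_or_ne i k with rfl | hik
        · exact absurd rfl hjk
        · simp [Function.update_self, Function.update_of_ne, hjk, Ne.symm hjk, hik]
        · simp [Function.update_self, Function.update_of_ne, hjk, Ne.symm hjk, hij]
        · simp [Function.update_of_ne hij, Function.update_of_ne hik]
      · -- r j = p - 1, r k increments
        have hj' : (r j : ℕ) = p - 1 := by have := (r j).isLt; omega
        -- LHS
        rw [yop_single_eq hp a hj' 1]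
        -- RHS inner
        rw [yop_single_lt hp a hk 1]
        have h2 : ((Function.update r k ⟨(r k : ℕ) + 1, hk⟩ j : Fin p) : ℕ) = p - 1 := by
          rw [Function.update_of_ne hjk]; exact hj'
        rw [yop_single_eq hp a h2 1, map_smul]
        rw [key _ (hr ▸ filter_update_card_lt hp hj') k (j+1)]
        have h3 : ((Function.update r j (fz hp) k : Fin p) : ℕ) + 1 < p := by
          rw [Function.update_of_ne (Ne.symm hjk)]; exact hk
        rw [yop_single_lt hp a h3 1]
        refine congrArg (fun z => a (j+1) • yop hp a (j+1) (Finsupp.single z (1 : R))) ?_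
        funext i
        rcases eq_or_ne i j with rfl | hij <;> rcases eq_or_ne i k with rfl | hik
        · exact absurd rfl hjk
        · simp [Function.update_self, Function.update_of_ne, hjk, Ne.symm hjk, hik]
        · simp [Function.update_self, Function.update_of_ne, hjk, Ne.symm hjk, hij]
        · simp [Function.update_of_ne hij, Function.update_of_ne hik]
    · rcases lt_or_ge ((r j : ℕ) + 1) p with hj | hj
      · -- r k = p - 1, r j increments (mirror of previous case)
        have hk' : (r k : ℕ) = p - 1 := by have := (r k).isLt; omega
        rw [yop_single_eq hp a hk' 1]
        rw [yop_single_lt hp a hj 1]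
        have h2 : ((Function.update r j ⟨(r j : ℕ) + 1, hj⟩ k : Fin p) : ℕ) = p - 1 := by
          rw [Function.update_of_ne (Ne.symm hjk)]; exact hk'
        rw [yop_single_eq hp a h2 1, map_smul]
        rw [key _ (hr ▸ filter_update_card_lt hp hk') j (k+1)]
        have h3 : ((Function.update r k (fz hp) j : Fin p) : ℕ) + 1 < p := by
          rw [Function.update_of_ne hjk]; exact hj
        rw [yop_single_lt hp a h3 1]
        refine congrArg (fun z => a (k+1) • yop hp a (k+1) (Finsupp.single z (1 : R))) ?_
        funext i
        rcases eq_or_ne i j with rfl | hij <;> rcases eq_or_ne i k with rfl | hik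
        · exact absurd rfl hjk
        · simp [Function.update_self, Function.update_of_ne, hjk, Ne.symm hjk, hik]
        · simp [Function.update_self, Function.update_of_ne, hjk, Ne.symm hjk, hij]
        · simp [Function.update_of_ne hij, Function.update_of_ne hik]
      · -- both cascade
        have hk' : (r k : ℕ) = p - 1 := by have := (r k).isLt; omega
        have hj' : (r j : ℕ) = p - 1 := by have := (r j).isLt; omega
        rw [yop_single_eq hp a hk' 1, yop_single_eq hp a hj' 1, map_smul, map_smul]
        rw [key _ (hr ▸ filter_update_card_lt hp hk') j (k+1)]
        rw [key _ (hr ▸ filter_update_card_lt hp hj') k (j+1)]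
        have h2 : ((Function.update r k (fz hp) j : Fin p) : ℕ) = p - 1 := by
          rw [Function.update_of_ne hjk]; exact hj'
        have h3 : ((Function.update r j (fz hp) k : Fin p) : ℕ) = p - 1 := by
          rw [Function.update_of_ne (Ne.symm hjk)]; exact hk'
        rw [yop_single_eq hp a h2 1, yop_single_eq hp a h3 1, map_smul, map_smul]
        have hcard2 : (Finset.univ.filter fun i =>
            ((Function.update (Function.update r k (fz hp)) j (fz hp) i : Fin p) : ℕ) = p - 1).card < N :=
          lt_trans (filter_update_card_lt hp h2) (hr ▸ filter_update_card_lt hp hk')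
        rw [key _ hcard2 (k+1) (j+1)]
        rw [smul_comm (a (j+1)) (a (k+1))]
        refine congrArg (fun z =>
          a (k+1) • a (j+1) • yop hp a (j+1) (yop hp a (k+1) (Finsupp.single z (1 : R)))) ?_
        rw [Function.update_comm (Ne.symm hjk)]


lemma yop_commute (j k : Fin n) : Commute (yop hp a j) (yop hp a k) := by
  apply Finsupp.lhom_ext
  intro r c
  have h1 : (Finsupp.single r c : (Fin n → Fin p) →₀ R) = c • Finsupp.single r 1 := by
    rw [Finsupp.smul_single, smul_eq_mul, mul_one]
  simp only [Module.End.mul_apply, h1, map_smul]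
  rw [yop_comm_single hp a _ r rfl j k]

lemma yop_pow_single (k : Fin n) (m : ℕ) (r : Fin n → Fin p) (h : (r k : ℕ) + m < p) :
    ((yop hp a k) ^ m) (Finsupp.single r (1 : R))
      = Finsupp.single (Function.update r k ⟨(r k : ℕ) + m, h⟩) 1 := by
  induction m generalizing r with
  | zero =>
    have : Function.update r k (⟨(r k : ℕ) + 0, h⟩ : Fin p) = r := by
      have : (⟨(r k : ℕ) + 0, h⟩ : Fin p) = r k := Fin.ext (by simp)
      rw [this, Function.update_eq_self]
    rw [pow_zero, Module.End.one_apply, this]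
  | succ m IH =>
    rw [pow_succ, Module.End.mul_apply]
    have h1 : (r k : ℕ) + 1 < p := by omega
    rw [yop_single_lt hp a h1 1]
    have h2 : ((Function.update r k ⟨(r k : ℕ) + 1, h1⟩ k : Fin p) : ℕ) + m < p := by
      simp only [Function.update_self, Fin.val_mk]; omega
    rw [IH _ h2]
    refine congrArg (fun z => Finsupp.single z (1 : R)) ?_
    rw [Function.update_idem]
    refine congrArg (Function.update r k) (Fin.ext ?_)
    simp [Function.update_self]
    omega

lemma yop_pow_p (k : Fin n) :
    (yop hp a k) ^ p = a (k + 1) • yop hp a (k + 1) := by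
  apply Finsupp.lhom_ext
  intro r c
  have h1 : (Finsupp.single r c : (Fin n → Fin p) →₀ R) = c • Finsupp.single r 1 := by
    rw [Finsupp.smul_single, smul_eq_mul, mul_one]
  rw [h1, map_smul, map_smul]
  refine congrArg (c • ·) ?_
  have hs : (r k : ℕ) ≤ p - 1 := by have := (r k).isLt; omega
  set s : ℕ := (r k : ℕ) with hsdef
  have hsplit : (yop hp a k) ^ p
      = (yop hp a k) ^ s * ((yop hp a k) * (yop hp a k) ^ (p - 1 - s)) := by
    rw [← pow_succ', ← pow_add]
    congr 1
    omega
  rw [hsplit, Module.End.mul_apply, Module.End.mul_apply]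
  have h2 : (r k : ℕ) + (p - 1 - s) < p := by omega
  rw [yop_pow_single hp a k _ r h2]
  have h3 : ((Function.update r k ⟨(r k : ℕ) + (p - 1 - s), h2⟩ k : Fin p) : ℕ) = p - 1 := by
    simp only [Function.update_self, Fin.val_mk]; omega
  rw [yop_single_eq hp a h3 1, Function.update_idem, map_smul, LinearMap.smul_apply]
  refine congrArg (a (k + 1) • ·) ?_
  have hcomm : Commute ((yop hp a k) ^ s) (yop hp a (k + 1)) :=
    ((yop_commute hp a k (k + 1)).pow_left s)
  have := congrFun (congrArg DFunLike.coe hcomm.eq)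
    (Finsupp.single (Function.update r k (fz hp)) (1 : R))
  simp only [Module.End.mul_apply] at this
  rw [this]
  refine congrArg (yop hp a (k + 1)) ?_
  have h4 : ((Function.update r k (fz hp) k : Fin p) : ℕ) + s < p := by
    simp only [Function.update_self, fz, Fin.val_mk]; omega
  rw [yop_pow_single hp a k s _ h4, Function.update_idem]
  refine congrArg (fun z => Finsupp.single z (1 : R)) ?_
  have : (⟨((Function.update r k (fz hp) k : Fin p) : ℕ) + s, h4⟩ : Fin p) = r k := by
    apply Fin.ext
    simp [Function.update_self, fz, hsdef]
  rw [this, Function.update_eq_self]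


/-- The endomorphism corresponding to multiplication by the monomial with exponents `e`. -/
noncomputable def Wop (e : Fin n →₀ ℕ) : Module.End R ((Fin n → Fin p) →₀ R) :=
  Finset.univ.noncommProd (fun k => (yop hp a k) ^ e k)
    (fun i _ j _ _ => (yop_commute hp a i j).pow_pow _ _)

lemma noncommProd_eq_of_eq_one {M : Type*} [Monoid M] (f : Fin n → M) (k : Fin n)
    (h1 : ∀ j, j ≠ k → f j = 1) (hc) :
    Finset.univ.noncommProd f hc = f k := by
  classical
  refine (Finset.noncommProd_congr (Finset.insert_erase (Finset.mem_univ k)).symm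
    (fun x _ => rfl) hc).trans ?_
  erw [Finset.noncommProd_insert_of_notMem _ _ _ _ (Finset.notMem_erase _ _),
    Finset.noncommProd_eq_pow_card _ _ _ 1 (fun j hj => h1 j (Finset.ne_of_mem_erase hj)),
    one_pow, mul_one]

lemma Wop_zero : Wop hp a (0 : Fin n →₀ ℕ) = (1 : Module.End R ((Fin n → Fin p) →₀ R)) := by
  rw [Wop]
  have := Finset.noncommProd_eq_pow_card (Finset.univ)
    (fun k => (yop hp a k (R := R)) ^ (0 : Fin n →₀ ℕ) k)
    (fun i _ j _ _ => (yop_commute hp a i j).pow_pow _ _) 1 (fun j _ => by simp)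
  rw [this, one_pow]

lemma Wop_add (e f : Fin n →₀ ℕ) :
    Wop hp a (e + f) = (Wop hp a e) * (Wop hp a f) := by
  rw [Wop, Wop, Wop]
  have hfun : (fun k => (yop hp a k (R := R)) ^ (e + f) k)
      = (fun k => (yop hp a k) ^ e k) * (fun k => (yop hp a k) ^ f k) := by
    funext k
    simp [Finsupp.add_apply, pow_add]
  rw [Finset.noncommProd_congr rfl (fun k _ => congrFun hfun k)
    (fun i _ j _ _ => (yop_commute hp a i j).pow_pow _ _)]
  exact Finset.noncommProd_mul_distrib _ _
    (fun i _ j _ _ => (yop_commute hp a i j).pow_pow _ _)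
    (fun i _ j _ _ => (yop_commute hp a i j).pow_pow _ _)
    (fun i _ j _ _ => (yop_commute hp a i j).pow_pow _ _)

lemma Wop_single (k : Fin n) (m : ℕ) :
    Wop hp a (Finsupp.single k m) = (yop hp a k (R := R)) ^ m := by
  rw [Wop]
  have := noncommProd_eq_of_eq_one (fun j => (yop hp a j (R := R)) ^ (Finsupp.single k m) j) k
    (fun j hj => by simp [Finsupp.single_apply, (Ne.symm hj)])
    (fun i _ j _ _ => (yop_commute hp a i j).pow_pow _ _)
  rw [this, Finsupp.single_eq_same]

/-- The action of `MvPolynomial (Fin n) R` on the free module on reduced exponents. -/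
noncomputable def Phi : MvPolynomial (Fin n) R →ₐ[R] Module.End R ((Fin n → Fin p) →₀ R) :=
  AddMonoidAlgebra.lift R (Module.End R ((Fin n → Fin p) →₀ R)) (Fin n →₀ ℕ)
    { toFun := fun e => Wop hp a (Multiplicative.toAdd e)
      map_one' := Wop_zero hp a
      map_mul' := fun e f => Wop_add hp a (Multiplicative.toAdd e) (Multiplicative.toAdd f) }

lemma Phi_monomial (e : Fin n →₀ ℕ) (c : R) :
    Phi hp a (MvPolynomial.monomial e c) = c • Wop hp a e := by
  rw [← MvPolynomial.single_eq_monomial]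
  exact AddMonoidAlgebra.lift_single _ _ _

lemma Phi_X (k : Fin n) : Phi hp a (MvPolynomial.X k) = yop hp a k := by
  rw [MvPolynomial.X, Phi_monomial, Wop_single, pow_one, one_smul]


/-- The all-zero reduced exponent vector. -/
def r0 (hp : 2 ≤ p) : Fin n → Fin p := fun _ => fz hp

lemma noncommProd_apply_single (r : Fin n → Fin p) :
    ∀ s : Finset (Fin n),
      (s.noncommProd (fun k => (yop hp a k (R := R)) ^ (r k : ℕ))
          (fun i _ j _ _ => (yop_commute hp a i j).pow_pow _ _))
          (Finsupp.single (r0 hp) 1)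
        = Finsupp.single (fun j => if j ∈ s then r j else fz hp) 1 := by
  classical
  intro s
  induction s using Finset.induction_on with
  | empty =>
    erw [Finset.noncommProd_empty]
    simp only [Module.End.one_apply]
    rfl
  | @insert k s hnot ih =>
    erw [Finset.noncommProd_insert_of_notMem _ _ _ _ hnot, Module.End.mul_apply, ih]
    have h0 : (((fun j => if j ∈ s then r j else fz hp) k : Fin p) : ℕ) + (r k : ℕ) < p := by
      simp only [if_neg hnot, fz, Fin.val_mk]
      have := (r k).isLt
      omega
    rw [yop_pow_single hp a k _ _ h0]
    refine congrArg (fun z => Finsupp.single z (1 : R)) ?_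
    funext i
    rcases eq_or_ne i k with rfl | hik
    · rw [Function.update_self]
      apply Fin.ext
      simp [if_neg hnot, fz, Finset.mem_insert]
    · rw [Function.update_of_ne hik]
      simp [Finset.mem_insert, hik]

lemma prod_X_pow_eq (r : Fin n → Fin p) :
    (∏ k, MvPolynomial.X k ^ (r k : ℕ) : MvPolynomial (Fin n) R)
      = MvPolynomial.monomial (Finsupp.equivFunOnFinite.symm fun k => (r k : ℕ)) 1 := by
  rw [MvPolynomial.monomial_eq, MvPolynomial.C_1, one_mul,
    Finsupp.prod_fintype _ _ (fun i => pow_zero _)]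
  refine Finset.prod_congr rfl fun k _ => ?_
  congr 1

lemma Phi_prod_apply (r : Fin n → Fin p) :
    Phi hp a (∏ k, MvPolynomial.X k ^ (r k : ℕ)) (Finsupp.single (r0 hp) 1)
      = Finsupp.single r 1 := by
  rw [prod_X_pow_eq, Phi_monomial, one_smul, Wop]
  have hcongr : (fun k => (yop hp a k (R := R)) ^ ((Finsupp.equivFunOnFinite.symm
      fun k => (r k : ℕ)) k)) = fun k => (yop hp a k) ^ (r k : ℕ) := by
    funext k
    congr 1
  rw [Finset.noncommProd_congr rfl (fun k _ => congrFun hcongr k)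
    (fun i _ j _ _ => (yop_commute hp a i j).pow_pow _ _)]
  rw [noncommProd_apply_single hp a r Finset.univ]
  simp

open MvPolynomial in
lemma Phi_gen (k : Fin n) :
    Phi hp a ((X (k - 1)) ^ p - C (a k) * X k) = 0 := by
  rw [map_sub, map_pow, map_mul, Phi_X, Phi_X, yop_pow_p]
  have h1 : (k - 1) + 1 = k := by abel
  rw [h1, ← MvPolynomial.algebraMap_eq, AlgHom.commutes, ← Algebra.smul_def, sub_self]

open MvPolynomial in
lemma Phi_vanish (x : MvPolynomial (Fin n) R)
    (hx : x ∈ Ideal.span (Set.range fun k : Fin n => (X (k - 1)) ^ p - C (a k) * X k)) :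
    Phi hp a x (Finsupp.single (r0 hp) 1) = 0 := by
  refine Submodule.span_induction ?_ ?_ ?_ ?_ hx
  · rintro x ⟨k, rfl⟩
    rw [Phi_gen]
    rfl
  · rw [map_zero]; rfl
  · intro x y _ _ hx hy
    rw [map_add, LinearMap.add_apply, hx, hy, add_zero]
  · intro c x _ hx
    rw [smul_eq_mul, map_mul, Module.End.mul_apply, hx, map_zero]



include hp in
open MvPolynomial in
lemma monomial_mem_span :
    ∀ (N : ℕ) (e : Fin n →₀ ℕ), (e.sum fun _ m => m) ≤ N →
      Ideal.Quotient.mk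
          (Ideal.span (Set.range fun k : Fin n => (X (k - 1)) ^ p - C (a k) * X k))
          (MvPolynomial.monomial e 1)
        ∈ Submodule.span R (Set.range fun r : Fin n → Fin p =>
            Ideal.Quotient.mk
              (Ideal.span (Set.range fun k : Fin n => (X (k - 1)) ^ p - C (a k) * X k))
              (∏ k, MvPolynomial.X k ^ (r k : ℕ))) := by
  intro N
  induction N using Nat.strong_induction_on with
  | _ N IH =>
    intro e he
    have hp2 : 2 ≤ p := hp
    by_cases hred : ∀ k, e k < p
    · set r : Fin n → Fin p := fun k => ⟨e k, hred k⟩ with hrdef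
      have herm : MvPolynomial.monomial e (1 : R) = ∏ k, MvPolynomial.X k ^ (r k : ℕ) := by
        rw [prod_X_pow_eq]
        congr 1
        ext k
        simp [hrdef]
      rw [herm]
      exact Submodule.subset_span ⟨r, rfl⟩
    · push_neg at hred
      obtain ⟨k, hk⟩ := hred
      have hk' : p ≤ e k := hk
      set e' : Fin n →₀ ℕ := e - Finsupp.single k p with he'def
      have hsum : e' + Finsupp.single k p = e := by
        ext j
        rcases eq_or_ne j k with rfl | hjk
        · simp [he'def, Finsupp.tsub_apply]
          omega
        · simp [he'def, Finsupp.tsub_apply, Finsupp.single_apply, Ne.symm hjk]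
      have hmon : MvPolynomial.monomial e (1 : R)
          = MvPolynomial.monomial e' 1 * MvPolynomial.X k ^ p := by
        rw [MvPolynomial.X_pow_eq_monomial, MvPolynomial.monomial_mul, mul_one, hsum]
      set I := Ideal.span (Set.range fun k : Fin n =>
        (X (k - 1)) ^ p - C (a k) * X k) with hIdef
      have hq : Ideal.Quotient.mk I (MvPolynomial.X k ^ p)
          = Ideal.Quotient.mk I (MvPolynomial.C (a (k + 1)) * MvPolynomial.X (k + 1)) := by
        rw [Ideal.Quotient.eq]
        refine Ideal.subset_span ⟨k + 1, ?_⟩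
        simp only
        rw [add_sub_cancel_right]
      have hrw : Ideal.Quotient.mk I (MvPolynomial.monomial e 1)
          = a (k + 1) • Ideal.Quotient.mk I
              (MvPolynomial.monomial (e' + Finsupp.single (k + 1) 1) 1) := by
        rw [hmon, map_mul, hq, ← map_mul]
        have hsm : MvPolynomial.monomial e' (1 : R)
            * (MvPolynomial.C (a (k + 1)) * MvPolynomial.X (k + 1))
            = a (k + 1) • MvPolynomial.monomial (e' + Finsupp.single (k + 1) 1) 1 := by
          rw [MvPolynomial.C_apply, MvPolynomial.X, MvPolynomial.monomial_mul,
            MvPolynomial.monomial_mul, MvPolynomial.smul_monomial]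
          simp
        rw [hsm, ← Ideal.Quotient.mkₐ_eq_mk R I, map_smul, Ideal.Quotient.mkₐ_eq_mk]
      rw [hrw]
      refine Submodule.smul_mem _ _ ?_
      have h1 : (e.sum fun _ m => m) = (e'.sum fun _ m => m) + p := by
        rw [← hsum, Finsupp.sum_add_index' (fun _ => rfl) (fun _ _ _ => rfl),
          Finsupp.sum_single_index rfl]
      have hsum2 : ((e' + Finsupp.single (k + 1) 1).sum fun _ m => m) ≤ N - 1 := by
        have h2 : ((e' + Finsupp.single (k + 1) 1).sum fun _ m => m)
            = (e'.sum fun _ m => m) + 1 := by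
          rw [Finsupp.sum_add_index' (fun _ => rfl) (fun _ _ _ => rfl),
            Finsupp.sum_single_index rfl]
        omega
      exact IH (N - 1) (by omega) _ hsum2

end Stmt6Aux



open MvPolynomial

/-- The algebra `A = R[x_0,…,x_{n-1}]/(x_{k-1}^p - a_k x_k, k = 0,…,n-1)` (indices mod `n`)
is a free `R`-module of rank `p^n`, with basis the images of the monomials
`x_0^{r_0} ⋯ x_{n-1}^{r_{n-1}}`, `0 ≤ r_k ≤ p-1`. -/
theorem stmt6 (R : Type*) [CommRing R] (p n : ℕ) (hp : 2 ≤ p) [NeZero n]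
    (a : Fin n → R) :
    ∃ B : Module.Basis (Fin n → Fin p) R
      (MvPolynomial (Fin n) R ⧸
        Ideal.span (Set.range fun k : Fin n => (X (k - 1)) ^ p - C (a k) * X k)),
      ∀ r : Fin n → Fin p,
        B r = Ideal.Quotient.mk
          (Ideal.span (Set.range fun k : Fin n => (X (k - 1)) ^ p - C (a k) * X k))
          (∏ k : Fin n, (X k) ^ ((r k : ℕ))) := by
  classical
  set I := Ideal.span (Set.range fun k : Fin n => (X (k - 1)) ^ p - C (a k) * X k) with hI
  have hli : LinearIndependent R (fun r : Fin n → Fin p =>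
      Ideal.Quotient.mk I (∏ k, (X k : MvPolynomial (Fin n) R) ^ (r k : ℕ))) := by
    rw [linearIndependent_iff]
    intro l hl
    have h0 : Ideal.Quotient.mk I
        (l.sum fun r c => c • ∏ k, (X k : MvPolynomial (Fin n) R) ^ (r k : ℕ)) = 0 := by
      rw [← Ideal.Quotient.mkₐ_eq_mk R I, map_finsuppSum]
      rw [Finsupp.linearCombination_apply] at hl
      refine Eq.trans ?_ hl
      refine Finsupp.sum_congr fun r _ => ?_
      rw [map_smul, Ideal.Quotient.mkₐ_eq_mk]
    have hmem : (l.sum fun r c => c • ∏ k, (X k : MvPolynomial (Fin n) R) ^ (r k : ℕ)) ∈ I :=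
      Ideal.Quotient.eq_zero_iff_mem.mp h0
    have hv := Stmt6Aux.Phi_vanish hp a _ hmem
    have hv2 : (l.sum fun r c => Finsupp.single r c) = (0 : (Fin n → Fin p) →₀ R) := by
      calc l.sum (fun r c => Finsupp.single r c)
          = (Stmt6Aux.Phi hp a (l.sum fun r c =>
              c • ∏ k, (X k : MvPolynomial (Fin n) R) ^ (r k : ℕ)))
              (Finsupp.single (Stmt6Aux.r0 hp) 1) := by
            rw [map_finsuppSum, Finsupp.sum, Finsupp.sum, LinearMap.sum_apply]
            refine Finset.sum_congr rfl fun r _ => ?_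
            rw [map_smul, LinearMap.smul_apply, Stmt6Aux.Phi_prod_apply hp a r,
              Finsupp.smul_single', mul_one]
        _ = 0 := hv
    rwa [Finsupp.sum_single] at hv2
  have hsp : ⊤ ≤ Submodule.span R (Set.range fun r : Fin n → Fin p =>
      Ideal.Quotient.mk I (∏ k, (X k : MvPolynomial (Fin n) R) ^ (r k : ℕ))) := by
    rintro x -
    obtain ⟨f, rfl⟩ := Ideal.Quotient.mk_surjective x
    rw [← MvPolynomial.support_sum_monomial_coeff f, map_sum]
    refine Submodule.sum_mem _ fun e _ => ?_
    have hsm : MvPolynomial.monomial e (MvPolynomial.coeff e f)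
        = (MvPolynomial.coeff e f) • MvPolynomial.monomial e 1 := by
      rw [MvPolynomial.smul_monomial, smul_eq_mul, mul_one]
    rw [hsm, ← Ideal.Quotient.mkₐ_eq_mk R I, map_smul, Ideal.Quotient.mkₐ_eq_mk]
    exact Submodule.smul_mem _ _
      (Stmt6Aux.monomial_mem_span hp a ((e.sum fun _ m => m)) e le_rfl)
  exact ⟨Module.Basis.mk hli hsp, fun r => Module.Basis.mk_apply _ _ _⟩
end

section
/- Let R be a commutative ring, p ≥ 2, n ≥ 1, and a_0,...,a_{n−1} ∈ R all invertible. Set c := a_0 · a_{n−1}^p ⋯ a_1^{p^{n−1}} and A := R[x_0,...,x_{n−1}]/(x_0^p − a_1 x_1, ..., x_{n−1}^p − a_0 x_0). Then the R-algebra homomorphism R[t]/(t^{p^n} − c·t) → A sending t to x_0 is an isomorphism. -/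
open MvPolynomial

namespace Stmt8Aux

open Fin.NatCast

variable {R : Type*} [CommRing R] (p n : ℕ) [NeZero n] (a : Fin n → Rˣ)

noncomputable def w (k : ℕ) : Rˣ :=
  (∏ j ∈ Finset.range k, a ((j + 1 : ℕ) : Fin n) ^ p ^ (k - 1 - j))⁻¹

lemma w_zero : w p n a 0 = 1 := by simp [w]

lemma w_succ (k : ℕ) :
    w p n a (k + 1) = (w p n a k) ^ p * (a ((k + 1 : ℕ) : Fin n))⁻¹ := by
  have h : ∀ j ∈ Finset.range k,
      a ((j + 1 : ℕ) : Fin n) ^ p ^ (k - j)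
        = (a ((j + 1 : ℕ) : Fin n) ^ p ^ (k - 1 - j)) ^ p := by
    intro j hj
    rw [← pow_mul, ← pow_succ]
    have hh : k - j = k - 1 - j + 1 := by
      have := Finset.mem_range.1 hj; omega
    rw [hh]
  rw [w, w, Finset.prod_range_succ]
  have h2 : (∏ j ∈ Finset.range k, a ((j + 1 : ℕ) : Fin n) ^ p ^ (k + 1 - 1 - j))
      = (∏ j ∈ Finset.range k, a ((j + 1 : ℕ) : Fin n) ^ p ^ (k - 1 - j)) ^ p := by
    rw [← Finset.prod_pow]
    refine Finset.prod_congr rfl ?_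
    intro j hj
    have := h j hj
    simpa using this
  simp only [Nat.add_sub_cancel, Nat.sub_self, pow_zero, pow_one] at *
  rw [h2, mul_inv, ← inv_pow]

lemma C_mul_w_pow :
    (∏ k : Fin n, a k ^ p ^ ((n - (k : ℕ)) % n)) * (w p n a (n - 1)) ^ p = a 0 := by
  obtain ⟨m, rfl⟩ : ∃ m, n = m + 1 := ⟨n - 1, by have := NeZero.pos n; omega⟩
  have h1 : (∏ k : Fin (m + 1), a k ^ p ^ ((m + 1 - (k : ℕ)) % (m + 1)))
      = ∏ i ∈ Finset.range (m + 1),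
          a ((i : ℕ) : Fin (m + 1)) ^ p ^ ((m + 1 - i) % (m + 1)) := by
    rw [← Fin.prod_univ_eq_prod_range
      (fun i => a ((i : ℕ) : Fin (m + 1)) ^ p ^ ((m + 1 - i) % (m + 1)))]
    simp [Fin.cast_val_eq_self]
  rw [h1, Finset.prod_range_succ']
  have h2 : ∀ i ∈ Finset.range m,
      a ((i + 1 : ℕ) : Fin (m + 1)) ^ p ^ ((m + 1 - (i + 1)) % (m + 1))
        = a ((i + 1 : ℕ) : Fin (m + 1)) ^ p ^ (m - i) := by
    intro i hi
    have hlt := Finset.mem_range.1 hi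
    have e1 : m + 1 - (i + 1) = m - i := by omega
    rw [e1, Nat.mod_eq_of_lt (by omega)]
  rw [Finset.prod_congr rfl h2]
  have h3 : (w p (m + 1) a ((m + 1) - 1)) ^ p
      = (∏ j ∈ Finset.range m, a ((j + 1 : ℕ) : Fin (m + 1)) ^ p ^ (m - j))⁻¹ := by
    simp only [Nat.add_sub_cancel]
    rw [w, inv_pow]
    congr 1
    rw [← Finset.prod_pow]
    refine Finset.prod_congr rfl ?_
    intro j hj
    have hlt := Finset.mem_range.1 hj
    rw [← pow_mul, ← pow_succ]
    have : m - 1 - j + 1 = m - j := by omega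
    rw [this]
  rw [h3]
  have : ((m + 1 : ℕ) - 0) % (m + 1) = 0 := by simp
  rw [this]
  simp only [Nat.cast_zero, pow_zero, pow_one]
  rw [mul_right_comm]
  simp

lemma fin_cast_sub_one (k : ℕ) : (((k + 1 : ℕ) : Fin n) - 1) = ((k : ℕ) : Fin n) := by
  rw [sub_eq_iff_eq_add]
  push_cast
  ring

lemma fin_zero_sub_one : ((0 : Fin n) - 1) = (((n - 1 : ℕ)) : Fin n) := by
  rw [sub_eq_iff_eq_add]
  have : ((n - 1 : ℕ) : Fin n) + 1 = ((n - 1 + 1 : ℕ) : Fin n) := by push_cast; ring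
  rw [this, Nat.sub_add_cancel (NeZero.one_le), Fin.natCast_self]

set_option maxHeartbeats 1000000 in
theorem main :
    ∃ φ : (Polynomial R ⧸
            Ideal.span {Polynomial.X ^ p ^ n -
              Polynomial.C (∏ k : Fin n, (a k : R) ^ p ^ ((n - (k : ℕ)) % n)) * Polynomial.X})
          ≃ₐ[R]
          (MvPolynomial (Fin n) R ⧸
            Ideal.span (Set.range fun k : Fin n => (X (k - 1)) ^ p - C ((a k : R)) * X k)),
      φ (Ideal.Quotient.mk _ Polynomial.X) =
        Ideal.Quotient.mk
          (Ideal.span (Set.range fun k : Fin n => (X (k - 1)) ^ p - C ((a k : R)) * X k))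
          (X 0) := by
  classical
  set c : R := ∏ k : Fin n, (a k : R) ^ p ^ ((n - (k : ℕ)) % n) with hc
  have hcval : c = ((∏ k : Fin n, a k ^ p ^ ((n - (k : ℕ)) % n) : Rˣ) : R) := by
    rw [hc]; push_cast; rfl
  set I : Ideal (Polynomial R) :=
    Ideal.span {Polynomial.X ^ p ^ n - Polynomial.C c * Polynomial.X} with hI
  set J : Ideal (MvPolynomial (Fin n) R) :=
    Ideal.span (Set.range fun k : Fin n => (X (k - 1)) ^ p - C ((a k : R)) * X k) with hJ
  set B := Polynomial R ⧸ I with hB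
  set A := MvPolynomial (Fin n) R ⧸ J with hA
  set T : B := Ideal.Quotient.mk I Polynomial.X with hT
  set x : Fin n → A := fun k => Ideal.Quotient.mk J (X k) with hx
  -- relation in A
  have relA : ∀ k : Fin n, (x (k - 1)) ^ p = algebraMap R A ((a k : R)) * x k := by
    intro k
    have hmem : (X (k - 1)) ^ p - C ((a k : R)) * X k ∈ J :=
      Ideal.subset_span ⟨k, rfl⟩
    have h0 := Ideal.Quotient.eq_zero_iff_mem.2 hmem
    rw [map_sub, map_pow, map_mul, ← MvPolynomial.algebraMap_eq,
      Ideal.Quotient.mk_algebraMap, sub_eq_zero] at h0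
    exact h0
  -- relation in B
  have relB : T ^ p ^ n = algebraMap R B c * T := by
    have hmem : Polynomial.X ^ p ^ n - Polynomial.C c * Polynomial.X ∈ I :=
      Ideal.subset_span rfl
    have h0 := Ideal.Quotient.eq_zero_iff_mem.2 hmem
    rw [map_sub, map_pow, map_mul, ← Polynomial.algebraMap_eq,
      Ideal.Quotient.mk_algebraMap, sub_eq_zero] at h0
    exact h0
  -- key claim in A
  have key : ∀ k : ℕ, k < n →
      algebraMap R A ((w p n a k : R)) * (x 0) ^ p ^ k = x ((k : ℕ) : Fin n) := by
    intro k
    induction k with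
    | zero => intro _; simp [w_zero]
    | succ k ih =>
      intro hk1
      have hk : k < n := by omega
      have ihk := ih hk
      have rel' : (x ((k : ℕ) : Fin n)) ^ p
          = algebraMap R A ((a (((k + 1 : ℕ)) : Fin n) : R)) * x (((k + 1 : ℕ)) : Fin n) := by
        have := relA (((k + 1 : ℕ)) : Fin n)
        rwa [fin_cast_sub_one] at this
      have e1 : (algebraMap R A ((w p n a k : R))) ^ p * (x 0) ^ p ^ (k + 1)
          = algebraMap R A ((a (((k + 1 : ℕ)) : Fin n) : R)) * x (((k + 1 : ℕ)) : Fin n) := by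
        calc (algebraMap R A ((w p n a k : R))) ^ p * (x 0) ^ p ^ (k + 1)
            = (algebraMap R A ((w p n a k : R)) * (x 0) ^ p ^ k) ^ p := by
              rw [mul_pow, ← pow_mul, ← pow_succ]
          _ = (x ((k : ℕ) : Fin n)) ^ p := by rw [ihk]
          _ = _ := rel'
      rw [w_succ, Units.val_mul, Units.val_pow_eq_pow_val, map_mul, map_pow]
      calc algebraMap R A ((w p n a k : R)) ^ p
            * algebraMap R A (((a (((k + 1 : ℕ)) : Fin n))⁻¹ : Rˣ) : R)
            * (x 0) ^ p ^ (k + 1)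
          = algebraMap R A (((a (((k + 1 : ℕ)) : Fin n))⁻¹ : Rˣ) : R)
              * ((algebraMap R A ((w p n a k : R))) ^ p * (x 0) ^ p ^ (k + 1)) := by ring
        _ = algebraMap R A (((a (((k + 1 : ℕ)) : Fin n))⁻¹ : Rˣ) : R)
              * (algebraMap R A ((a (((k + 1 : ℕ)) : Fin n) : R))
                * x (((k + 1 : ℕ)) : Fin n)) := by rw [e1]
        _ = algebraMap R A ((((a (((k + 1 : ℕ)) : Fin n))⁻¹ : Rˣ) : R)
              * ((a (((k + 1 : ℕ)) : Fin n) : R))) * x (((k + 1 : ℕ)) : Fin n) := by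
            rw [map_mul, mul_assoc]
        _ = x (((k + 1 : ℕ)) : Fin n) := by
            rw [Units.inv_mul, map_one, one_mul]
  -- main relation in A
  have hx0 : (x 0) ^ p ^ n = algebraMap R A c * x 0 := by
    have hn1 : n - 1 < n := by have := NeZero.pos n; omega
    have k1 := key (n - 1) hn1
    have rel0 : (x (((n - 1 : ℕ)) : Fin n)) ^ p = algebraMap R A ((a 0 : R)) * x 0 := by
      have := relA 0
      rwa [fin_zero_sub_one] at this
    have e1 : (algebraMap R A ((w p n a (n - 1) : R))) ^ p * (x 0) ^ p ^ n
        = algebraMap R A ((a 0 : R)) * x 0 := by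
      calc (algebraMap R A ((w p n a (n - 1) : R))) ^ p * (x 0) ^ p ^ n
          = (algebraMap R A ((w p n a (n - 1) : R)) * (x 0) ^ p ^ (n - 1)) ^ p := by
            rw [mul_pow, ← pow_mul, ← pow_succ, Nat.sub_add_cancel (NeZero.one_le)]
        _ = (x (((n - 1 : ℕ)) : Fin n)) ^ p := by rw [k1]
        _ = _ := rel0
    have hcw : c * (((w p n a (n - 1) : R)) ^ p) = (a 0 : R) := by
      rw [hcval, ← Units.val_pow_eq_pow_val, ← Units.val_mul, C_mul_w_pow]
    calc (x 0) ^ p ^ n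
        = algebraMap R A ((((w p n a (n - 1))⁻¹ : Rˣ) : R)) ^ p
            * ((algebraMap R A ((w p n a (n - 1) : R))) ^ p * (x 0) ^ p ^ n) := by
          rw [← mul_assoc, ← mul_pow, ← map_mul, Units.inv_mul, map_one, one_pow, one_mul]
      _ = algebraMap R A ((((w p n a (n - 1))⁻¹ : Rˣ) : R)) ^ p
            * (algebraMap R A ((a 0 : R)) * x 0) := by rw [e1]
      _ = algebraMap R A (((((w p n a (n - 1))⁻¹ : Rˣ) : R)) ^ p * (a 0 : R)) * x 0 := by
          rw [map_mul, map_pow, mul_assoc]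
      _ = algebraMap R A c * x 0 := by
          congr 1
          congr 1
          rw [← hcw, mul_comm c, ← mul_assoc, ← mul_pow, Units.inv_mul, one_pow, one_mul]
  -- forward algebra map
  let Φ₀ : Polynomial R →ₐ[R] A := Polynomial.aeval (x 0)
  have hΦ₀ : ∀ f ∈ I, Φ₀ f = 0 := by
    intro f hf
    have hle : I ≤ RingHom.ker Φ₀ := by
      rw [hI, Ideal.span_le, Set.singleton_subset_iff]
      show Φ₀ _ = 0
      rw [map_sub, map_mul, map_pow, Polynomial.aeval_X, ← Polynomial.algebraMap_eq,
        AlgHom.commutes, hx0, sub_self]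
    exact hle hf
  -- backward algebra map
  let Ψ₀ : MvPolynomial (Fin n) R →ₐ[R] B :=
    aeval (fun k : Fin n => algebraMap R B ((w p n a (k : ℕ) : R)) * T ^ p ^ (k : ℕ))
  have hΨ₀ : ∀ f ∈ J, Ψ₀ f = 0 := by
    intro f hf
    have hle : J ≤ RingHom.ker Ψ₀ := by
      rw [hJ, Ideal.span_le]
      rintro _ ⟨k, rfl⟩
      show Ψ₀ _ = 0
      rw [map_sub, map_mul, map_pow, aeval_X, aeval_X, ← MvPolynomial.algebraMap_eq,
        AlgHom.commutes]
      rcases eq_or_ne k 0 with rfl | hk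
      · rw [fin_zero_sub_one, Fin.val_natCast,
          Nat.mod_eq_of_lt (by have := NeZero.pos n; omega)]
        rw [mul_pow, ← pow_mul, ← pow_succ, Nat.sub_add_cancel (NeZero.one_le), relB, ← map_pow]
        have hcw : ((w p n a (n - 1) : R)) ^ p * c = (a 0 : R) := by
          rw [hcval, ← Units.val_pow_eq_pow_val, ← Units.val_mul, mul_comm, C_mul_w_pow]
        have h0 : ((0 : Fin n) : ℕ) = 0 := rfl
        rw [h0, w_zero]
        rw [Units.val_one, map_one, one_mul, pow_zero, pow_one,
          ← mul_assoc, ← map_mul, hcw]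
        exact sub_self _
      · have hpos : 0 < (k : ℕ) := Nat.pos_of_ne_zero
          (fun h => hk (Fin.val_injective (by simp [h])))
        have hsub' : (k - 1 : Fin n) = (((k : ℕ) - 1 : ℕ) : Fin n) := by
          have h := fin_cast_sub_one (n := n) ((k : ℕ) - 1)
          rwa [Nat.sub_add_cancel hpos, Fin.cast_val_eq_self] at h
        have hsub : ((k - 1 : Fin n) : ℕ) = (k : ℕ) - 1 := by
          rw [hsub', Fin.val_natCast, Nat.mod_eq_of_lt (by have := k.isLt; omega)]
        have hws := w_succ p n a ((k : ℕ) - 1)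
        rw [Nat.sub_add_cancel hpos, Fin.cast_val_eq_self] at hws
        rw [hsub, mul_pow, ← map_pow, ← pow_mul, ← pow_succ, Nat.sub_add_cancel hpos]
        rw [hws]
        have hthis : algebraMap R B ((a k : R))
              * (algebraMap R B ((((w p n a ((k : ℕ) - 1)) ^ p * (a k)⁻¹ : Rˣ) : R))
                 * T ^ p ^ (k : ℕ))
            = algebraMap R B ((w p n a ((k : ℕ) - 1) : R) ^ p) * T ^ p ^ (k : ℕ) := by
          rw [← mul_assoc, ← map_mul]
          congr 1
          rw [Units.val_mul, Units.val_pow_eq_pow_val, mul_comm, mul_assoc, Units.inv_mul,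
            mul_one]
        rw [hthis]
        exact sub_self _
    exact hle hf
  let Φ : B →ₐ[R] A := Ideal.Quotient.liftₐ I Φ₀ hΦ₀
  let Ψ : A →ₐ[R] B := Ideal.Quotient.liftₐ J Ψ₀ hΨ₀
  have hΦT : Φ T = x 0 := by
    show Ideal.Quotient.liftₐ I Φ₀ hΦ₀ (Ideal.Quotient.mk I Polynomial.X) = x 0
    rw [Ideal.Quotient.liftₐ_apply]
    exact Polynomial.aeval_X _
  have hΨx : ∀ k : Fin n,
      Ψ (x k) = algebraMap R B ((w p n a (k : ℕ) : R)) * T ^ p ^ (k : ℕ) := by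
    intro k
    show Ideal.Quotient.liftₐ J Ψ₀ hΨ₀ (Ideal.Quotient.mk J (X k)) = _
    rw [Ideal.Quotient.liftₐ_apply]
    exact aeval_X _ _
  have comp1 : Φ.comp Ψ = AlgHom.id R A := by
    apply Ideal.Quotient.algHom_ext R
    apply MvPolynomial.algHom_ext
    intro k
    show Φ (Ψ (x k)) = x k
    rw [hΨx, map_mul, map_pow, hΦT, AlgHom.commutes]
    have := key (k : ℕ) k.isLt
    rwa [Fin.cast_val_eq_self] at this
  have comp2 : Ψ.comp Φ = AlgHom.id R B := by
    apply Ideal.Quotient.algHom_ext R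
    apply Polynomial.algHom_ext
    show Ψ (Φ T) = T
    rw [hΦT, hΨx]
    have h0 : ((0 : Fin n) : ℕ) = 0 := rfl
    rw [h0, w_zero, pow_zero, pow_one, Units.val_one, map_one, one_mul]
  exact ⟨AlgEquiv.ofAlgHom Φ Ψ comp1 comp2, hΦT⟩

end Stmt8Aux


/-- When all `a_k` are invertible, with `c = a_0 · a_{n-1}^p ⋯ a_1^{p^{n-1}}`, the
`R`-algebra homomorphism `R[t]/(t^{p^n} - c·t) → R[x_0,…,x_{n-1}]/(x_{k-1}^p - a_k x_k)`
sending `t` to `x_0` is an isomorphism. -/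
theorem stmt8 (R : Type*) [CommRing R] (p n : ℕ) (hp : 2 ≤ p) [NeZero n]
    (a : Fin n → R) (ha : ∀ k, IsUnit (a k)) :
    ∃ φ : (Polynomial R ⧸
            Ideal.span {Polynomial.X ^ p ^ n -
              Polynomial.C (∏ k : Fin n, a k ^ p ^ ((n - (k : ℕ)) % n)) * Polynomial.X})
          ≃ₐ[R]
          (MvPolynomial (Fin n) R ⧸
            Ideal.span (Set.range fun k : Fin n => (X (k - 1)) ^ p - C (a k) * X k)),
      φ (Ideal.Quotient.mk _ Polynomial.X) =
        Ideal.Quotient.mk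
          (Ideal.span (Set.range fun k : Fin n => (X (k - 1)) ^ p - C (a k) * X k))
          (X 0) := by
  have key := Stmt8Aux.main p n (fun k => (ha k).unit)
  simp only [IsUnit.unit_spec] at key
  exact key
end

section
/- Let R be a commutative ring, p ≥ 2, n ≥ 1, and a_0,...,a_{n−1} ∈ R. Then the elements x_0^p − a_1 x_1, x_1^p − a_2 x_2, ..., x_{n−1}^p − a_0 x_0 form a regular sequence in the polynomial ring R[x_0, ..., x_{n−1}]. -/
open MvPolynomial

namespace Stmt11Aux

variable {R : Type*} [CommRing R]

noncomputable section

set_option linter.unusedSectionVars false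

variable (p : ℕ) {n : ℕ} [NeZero n] (a : Fin n → R)

/-- the generators -/
def g (k : Fin n) : MvPolynomial (Fin n) R := X k ^ p - C (a (k + 1)) * X (k + 1)

/-- the ideal generated by the first `K` generators -/
def Ik (K : ℕ) : Ideal (MvPolynomial (Fin n) R) :=
  Ideal.span (g p a '' {i : Fin n | (i : ℕ) < K})

/-- weight of a monomial -/
def W (d : Fin n →₀ ℕ) : ℕ := d.sum fun i m => m * p ^ (n - (i : ℕ))

lemma W_add_single (d : Fin n →₀ ℕ) (j : Fin n) (m : ℕ) :
    W p (d + Finsupp.single j m) = W p d + m * p ^ (n - (j : ℕ)) := by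
  unfold W
  rw [Finsupp.sum_add_index' (fun i => by simp) (fun i b c => by ring),
    Finsupp.sum_single_index (by simp)]

lemma val_succ {i : Fin n} (h : (i : ℕ) + 1 < n) : ((i + 1 : Fin n) : ℕ) = (i : ℕ) + 1 := by
  have h1 : (1 : Fin n) = ⟨1, by omega⟩ := by
    apply Fin.ext
    simp [Fin.val_one', Nat.mod_eq_of_lt (show 1 < n by omega)]
  rw [h1, Fin.val_add]
  simp [Nat.mod_eq_of_lt h]

lemma W_step (hp : 2 ≤ p) {d : Fin n →₀ ℕ} {i : Fin n} (hi : (i : ℕ) + 1 < n) (hd : p ≤ d i) :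
    W p (d - Finsupp.single i p + Finsupp.single (i + 1) 1) < W p d := by
  have hle : Finsupp.single i p ≤ d := Finsupp.single_le_iff.mpr hd
  have h1 : d = (d - Finsupp.single i p) + Finsupp.single i p := (tsub_add_cancel_of_le hle).symm
  rw [W_add_single, val_succ hi]
  conv_rhs => rw [h1, W_add_single]
  have h2 : 1 * p ^ (n - ((i : ℕ) + 1)) < p * p ^ (n - (i : ℕ)) := by
    rw [one_mul, ← pow_succ']
    exact Nat.pow_lt_pow_right (by omega) (by omega)
  omega

/-- normal form of a monomial modulo the first `K` relations -/
def NFm (hp : 2 ≤ p) (K : ℕ) (hK : K < n) (d : Fin n →₀ ℕ) : MvPolynomial (Fin n) R :=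
  if h : ∃ i : Fin n, (i : ℕ) < K ∧ p ≤ d i then
    C (a (h.choose + 1)) *
      NFm hp K hK (d - Finsupp.single h.choose p + Finsupp.single (h.choose + 1) 1)
  else monomial d 1
termination_by W p d
decreasing_by
  have h1 := h.choose_spec.1
  have h2 := h.choose_spec.2
  exact W_step p hp (by omega) h2


lemma NFm_eq_of_red (hp : 2 ≤ p) {K : ℕ} (hK : K < n) {d : Fin n →₀ ℕ}
    (h : ∀ i : Fin n, (i : ℕ) < K → d i < p) :
    NFm p a hp K hK d = monomial d 1 := by
  rw [NFm, dif_neg]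
  rintro ⟨i, hi, hpi⟩
  exact absurd hpi (not_le.mpr (h i hi))

lemma NFm_sub_mem (hp : 2 ≤ p) (K : ℕ) (hK : K < n) (d : Fin n →₀ ℕ) :
    (monomial d 1 : MvPolynomial (Fin n) R) - NFm p a hp K hK d ∈ Ik p a K := by
  suffices H : ∀ N (d : Fin n →₀ ℕ), W p d < N →
      (monomial d 1 : MvPolynomial (Fin n) R) - NFm p a hp K hK d ∈ Ik p a K from
    H _ d (Nat.lt_succ_self _)
  intro N
  induction N with
  | zero => exact fun d hd => absurd hd (Nat.not_lt_zero _)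
  | succ N ih =>
    intro d hd
    rw [NFm]
    by_cases h : ∃ i : Fin n, (i : ℕ) < K ∧ p ≤ d i
    · rw [dif_pos h]
      set i := h.choose with hi_def
      have hi1 : (i : ℕ) < K := h.choose_spec.1
      have hi2 : p ≤ d i := h.choose_spec.2
      set d' := d - Finsupp.single i p + Finsupp.single (i + 1) 1 with hd'
      have hstep : W p d' < W p d := W_step p hp (by omega) hi2
      have IH := ih d' (by omega)
      have hle : Finsupp.single i p ≤ d := Finsupp.single_le_iff.mpr hi2
      have e1 : (monomial (d - Finsupp.single i p) 1 : MvPolynomial (Fin n) R) * g p a i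
          = monomial d 1 - C (a (i + 1)) * monomial d' 1 := by
        rw [g, mul_sub, X_pow_eq_monomial, monomial_mul, mul_one, tsub_add_cancel_of_le hle]
        congr 1
        rw [mul_left_comm]
        congr 1
        rw [← pow_one (X (i + 1) : MvPolynomial (Fin n) R), X_pow_eq_monomial, monomial_mul,
          mul_one, hd']
      have hgmem : g p a i ∈ Ik p a K := Ideal.subset_span ⟨i, hi1, rfl⟩
      have e2 : (monomial d 1 : MvPolynomial (Fin n) R) - C (a (i + 1)) * NFm p a hp K hK d'
          = monomial (d - Finsupp.single i p) 1 * g p a i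
            + C (a (i + 1)) * (monomial d' 1 - NFm p a hp K hK d') := by
        rw [e1]; ring
      rw [e2]
      exact add_mem (Ideal.mul_mem_left _ _ hgmem) (Ideal.mul_mem_left _ _ IH)
    · rw [dif_neg h]
      simp

lemma NFm_red (hp : 2 ≤ p) (K : ℕ) (hK : K < n) (d : Fin n →₀ ℕ) :
    ∀ D : Fin n →₀ ℕ, ∀ i : Fin n, (i : ℕ) < K → p ≤ D i →
      coeff D (NFm p a hp K hK d) = 0 := by
  suffices H : ∀ N (d : Fin n →₀ ℕ), W p d < N → ∀ D : Fin n →₀ ℕ, ∀ i : Fin n,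
      (i : ℕ) < K → p ≤ D i → coeff D (NFm p a hp K hK d) = 0 from
    H _ d (Nat.lt_succ_self _)
  intro N
  induction N with
  | zero => exact fun d hd => absurd hd (Nat.not_lt_zero _)
  | succ N ih =>
    intro d hd D i hiK hpD
    rw [NFm]
    by_cases h : ∃ i : Fin n, (i : ℕ) < K ∧ p ≤ d i
    · rw [dif_pos h]
      have hi2 := h.choose_spec.2
      have hi1 := h.choose_spec.1
      have hstep := W_step p hp (i := h.choose) (by omega) hi2
      rw [coeff_C_mul, ih _ (by omega) D i hiK hpD, mul_zero]
    · rw [dif_neg h]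
      rw [coeff_monomial]
      split_ifs with hDd
      · subst hDd
        exact absurd ⟨i, hiK, hpD⟩ h
      · rfl


lemma NFm_deg (hp : 2 ≤ p) (K : ℕ) (hK : K < n) (t : Fin n) (ht : (t : ℕ) = n - 1) :
    ∀ (d : Fin n →₀ ℕ) (j : ℕ), (∀ i : Fin n, (i : ℕ) < K → d i ≤ p) →
      (∀ i : Fin n, (i : ℕ) < K → (i : ℕ) ≠ j → d i < p) →
      ∀ D ∈ (NFm p a hp K hK d).support, D t ≤ d t + 1 := by
  suffices H : ∀ N (d : Fin n →₀ ℕ), W p d < N → ∀ (j : ℕ),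
      (∀ i : Fin n, (i : ℕ) < K → d i ≤ p) →
      (∀ i : Fin n, (i : ℕ) < K → (i : ℕ) ≠ j → d i < p) →
      ∀ D ∈ (NFm p a hp K hK d).support, D t ≤ d t + 1 from
    fun d => H _ d (Nat.lt_succ_self _)
  intro N
  induction N with
  | zero => exact fun d hd => absurd hd (Nat.not_lt_zero _)
  | succ N ihN =>
    intro d hd j hle hG D hD
    rw [NFm] at hD
    by_cases h : ∃ i : Fin n, (i : ℕ) < K ∧ p ≤ d i
    · rw [dif_pos h] at hD
      set i := h.choose with hi_def
      have hi1 : (i : ℕ) < K := h.choose_spec.1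
      have hi2 : p ≤ d i := h.choose_spec.2
      have hij : (i : ℕ) = j := by
        by_contra hne
        exact absurd hi2 (not_le.mpr (hG i hi1 hne))
      have hdi : d i = p := le_antisymm (hle i hi1) hi2
      set d' := d - Finsupp.single i p + Finsupp.single (i + 1) 1 with hd'
      have hstep : W p d' < W p d := W_step p hp (by omega) hi2
      have hvs : ((i + 1 : Fin n) : ℕ) = (i : ℕ) + 1 := val_succ (by omega)
      have hd'app : ∀ x : Fin n, d' x =
          d x - (if i = x then p else 0) + (if i + 1 = x then 1 else 0) := by
        intro x
        simp [hd', Finsupp.single_apply]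
      have hti : t ≠ i := by
        intro e
        rw [e] at ht
        omega
      by_cases hcase : (i : ℕ) + 1 = n - 1
      · -- the carry hits position t = n-1; afterwards everything is reduced
        have hall : ∀ i' : Fin n, (i' : ℕ) < K → d' i' < p := by
          intro i' hi'
          have h1' : ¬ (i + 1 = i') := by
            intro e
            apply_fun (Fin.val) at e
            omega
          rw [hd'app, if_neg h1']
          by_cases hii : i = i'
          · rw [if_pos hii, ← hii]
            omega
          · rw [if_neg hii]
            have : (i' : ℕ) ≠ j := by
              intro e
              exact hii (Fin.ext (by omega))
            have := hG i' hi' this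
            omega
        rw [NFm_eq_of_red p a hp hK hall] at hD
        have hcoeff : coeff D (C (a (i + 1)) * monomial d' 1) ≠ 0 :=
          mem_support_iff.mp hD
        rw [coeff_C_mul, coeff_monomial] at hcoeff
        have hDd' : d' = D := by
          by_contra hne
          rw [if_neg hne, mul_zero] at hcoeff
          exact hcoeff rfl
        have hti1 : t = i + 1 := Fin.ext (by omega)
        have hit : ¬ (i = t) := fun e => hti e.symm
        rw [← hDd', hd'app, if_neg hit, if_pos hti1.symm]
        omega
      · -- carry does not hit t; use induction
        have hD' : D ∈ (NFm p a hp K hK d').support := by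
          rw [mem_support_iff] at hD ⊢
          intro hzero
          rw [coeff_C_mul, hzero, mul_zero] at hD
          exact hD rfl
        have hle' : ∀ i' : Fin n, (i' : ℕ) < K → d' i' ≤ p := by
          intro i' hi'
          rw [hd'app]
          by_cases h1' : i + 1 = i'
          · have hne : (i' : ℕ) ≠ j := by
              apply_fun (Fin.val) at h1'
              omega
            have := hG i' hi' hne
            split_ifs <;> omega
          · rw [if_neg h1']
            have := hle i' hi'
            split_ifs <;> omega
        have hG' : ∀ i' : Fin n, (i' : ℕ) < K → (i' : ℕ) ≠ j + 1 → d' i' < p := by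
          intro i' hi' hne
          rw [hd'app]
          have h1' : ¬ (i + 1 = i') := by
            intro e
            apply_fun (Fin.val) at e
            omega
          rw [if_neg h1']
          by_cases hii : i = i'
          · rw [if_pos hii, ← hii]
            omega
          · rw [if_neg hii]
            have : (i' : ℕ) ≠ j := by
              intro e
              exact hii (Fin.ext (by omega))
            have := hG i' hi' this
            omega
        have := ihN d' (by omega) (j + 1) hle' hG' D hD'
        have hdt : d' t = d t := by
          have hit : ¬ (i = t) := fun e => hti e.symm
          have hit1 : ¬ (i + 1 = t) := by
            intro e
            apply_fun (Fin.val) at e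
            omega
          rw [hd'app, if_neg hit, if_neg hit1]
          omega
        omega
    · rw [dif_neg h] at hD
      rw [mem_support_iff, coeff_monomial] at hD
      have : d = D := by
        by_contra hne
        rw [if_neg hne] at hD
        exact hD rfl
      rw [← this]
      omega


/-- reducedness predicate -/
def Red (K : ℕ) (f : MvPolynomial (Fin n) R) : Prop :=
  ∀ (D : Fin n →₀ ℕ) (i : Fin n), (i : ℕ) < K → p ≤ D i → coeff D f = 0

/-- normal form of a polynomial -/
def NFp (hp : 2 ≤ p) (K : ℕ) (hK : K < n) (f : MvPolynomial (Fin n) R) :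
    MvPolynomial (Fin n) R :=
  ∑ d ∈ f.support, C (coeff d f) * NFm p a hp K hK d

lemma NFp_add (hp : 2 ≤ p) (K : ℕ) (hK : K < n) (f f' : MvPolynomial (Fin n) R) :
    NFp p a hp K hK (f + f') = NFp p a hp K hK f + NFp p a hp K hK f' := by
  have key : ∀ h : MvPolynomial (Fin n) R, h.support ⊆ f.support ∪ f'.support →
      NFp p a hp K hK h = ∑ d ∈ f.support ∪ f'.support, C (coeff d h) * NFm p a hp K hK d := by
    intro h hsub
    rw [NFp]
    refine Finset.sum_subset hsub fun d _ hd => ?_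
    rw [notMem_support_iff.mp hd, map_zero, zero_mul]
  classical
  rw [key _ MvPolynomial.support_add, key f Finset.subset_union_left,
    key f' Finset.subset_union_right, ← Finset.sum_add_distrib]
  refine Finset.sum_congr rfl fun d _ => ?_
  rw [coeff_add, map_add, add_mul]

lemma NFp_sub_mem (hp : 2 ≤ p) (K : ℕ) (hK : K < n) (f : MvPolynomial (Fin n) R) :
    f - NFp p a hp K hK f ∈ Ik p a K := by
  have : f - NFp p a hp K hK f
      = ∑ d ∈ f.support, C (coeff d f) * (monomial d 1 - NFm p a hp K hK d) := by
    nth_rewrite 1 [← support_sum_monomial_coeff f]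
    rw [NFp, ← Finset.sum_sub_distrib]
    refine Finset.sum_congr rfl fun d _ => ?_
    rw [mul_sub, C_mul_monomial, mul_one]
  rw [this]
  exact Submodule.sum_mem _ fun d _ => Ideal.mul_mem_left _ _ (NFm_sub_mem p a hp K hK d)

lemma NFp_red (hp : 2 ≤ p) (K : ℕ) (hK : K < n) (f : MvPolynomial (Fin n) R) :
    Red p K (NFp p a hp K hK f) := by
  intro D i hiK hpD
  rw [NFp, coeff_sum]
  refine Finset.sum_eq_zero fun d _ => ?_
  rw [coeff_C_mul, NFm_red p a hp K hK d D i hiK hpD, mul_zero]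

lemma NFp_eq_self (hp : 2 ≤ p) (K : ℕ) (hK : K < n) {f : MvPolynomial (Fin n) R}
    (hf : Red p K f) : NFp p a hp K hK f = f := by
  rw [NFp]
  conv_rhs => rw [← support_sum_monomial_coeff f]
  refine Finset.sum_congr rfl fun d hd => ?_
  rw [NFm_eq_of_red p a hp hK, C_mul_monomial, mul_one]
  intro i hi
  by_contra hle
  exact mem_support_iff.mp hd (hf d i hi (not_lt.mp hle))

lemma Red.mono {K K' : ℕ} (hKK : K' ≤ K) {f : MvPolynomial (Fin n) R} (hf : Red p K f) :
    Red p K' f := fun D i hi hpD => hf D i (lt_of_lt_of_le hi hKK) hpD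

lemma Red.sub {K : ℕ} {f f' : MvPolynomial (Fin n) R} (hf : Red p K f) (hf' : Red p K f') :
    Red p K (f - f') := fun D i hi hpD => by
  rw [coeff_sub, hf D i hi hpD, hf' D i hi hpD, sub_zero]

lemma Red.C_mul {K : ℕ} {f : MvPolynomial (Fin n) R} (c : R) (hf : Red p K f) :
    Red p K (C c * f) := fun D i hi hpD => by
  rw [coeff_C_mul, hf D i hi hpD, mul_zero]

lemma Red.mul_monomial {K : ℕ} {f : MvPolynomial (Fin n) R} (hf : Red p K f)
    (j : Fin n) (hj : K ≤ (j : ℕ)) (m : ℕ) :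
    Red p K (f * monomial (Finsupp.single j m) 1) := by
  intro D i hi hpD
  rw [coeff_mul_monomial']
  split_ifs with hle
  · rw [mul_one]
    refine hf _ i hi ?_
    have hij : ¬ (j = i) := fun e => by omega
    rw [Finsupp.tsub_apply, Finsupp.single_apply, if_neg hij]
    omega
  · rfl

lemma Red.mul_X_pow {K : ℕ} {f : MvPolynomial (Fin n) R} (hf : Red p K f)
    (j : Fin n) (hj : K ≤ (j : ℕ)) (m : ℕ) :
    Red p K (f * X j ^ m) := by
  rw [X_pow_eq_monomial]
  exact hf.mul_monomial p j hj m

lemma Red.mul_X {K : ℕ} {f : MvPolynomial (Fin n) R} (hf : Red p K f)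
    (j : Fin n) (hj : K ≤ (j : ℕ)) : Red p K (f * X j) := by
  rw [← pow_one (X j : MvPolynomial (Fin n) R)]
  exact hf.mul_X_pow p j hj 1


/-- Key lemma: `r * X k ^ p - C c * (r * X j)` is nonzero with a witness monomial having
`k`-exponent at least `p`. -/
lemma key (hp : 2 ≤ p) (k j : Fin n) (c : R) {r : MvPolynomial (Fin n) R} (hr : r ≠ 0) :
    ∃ d : Fin n →₀ ℕ, p ≤ d k ∧ coeff d (r * X k ^ p - C c * (r * X j)) ≠ 0 := by
  classical
  obtain ⟨d0, hd0, hsup⟩ := Finset.exists_mem_eq_sup r.support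
    (support_nonempty.mpr hr) (fun d : Fin n →₀ ℕ => d k)
  set δ := r.support.sup (fun d : Fin n →₀ ℕ => d k) with hδ
  set D := d0 + Finsupp.single k p with hD
  have hDk : D k = δ + p := by
    rw [hD, Finsupp.add_apply, Finsupp.single_apply, if_pos rfl, hsup]
  refine ⟨D, by omega, ?_⟩
  have h1 : coeff D (r * X k ^ p) = coeff d0 r := by
    rw [X_pow_eq_monomial, coeff_mul_monomial', if_pos le_add_self, mul_one,
      add_tsub_cancel_right]
  have h2 : coeff D (C c * (r * X j)) = 0 := by
    rw [coeff_C_mul, coeff_mul_X']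
    split_ifs with hmem
    · have hDj : δ < (D - Finsupp.single j 1 : Fin n →₀ ℕ) k := by
        rw [Finsupp.tsub_apply, Finsupp.single_apply]
        split_ifs <;> omega
      have h4 : (D - Finsupp.single j 1 : Fin n →₀ ℕ) ∉ r.support := by
        intro hmem'
        have h3 : (D - Finsupp.single j 1 : Fin n →₀ ℕ) k ≤ δ := by
          exact Finset.le_sup (f := fun d : Fin n →₀ ℕ => d k) hmem'
        omega
      rw [notMem_support_iff.mp h4, mul_zero]
    · rw [mul_zero]
  rw [coeff_sub, h1, h2, sub_zero]
  exact mem_support_iff.mp hd0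

/-- independence: a reduced element of `Ik K` is zero -/
lemma indep (hp : 2 ≤ p) : ∀ K : ℕ, (hK : K < n) → ∀ h : MvPolynomial (Fin n) R,
    h ∈ Ik p a K → Red p K h → h = 0 := by
  intro K
  induction K with
  | zero =>
    intro hK h hmem _
    have : Ik p a 0 = ⊥ := by
      rw [Ik]
      convert Ideal.span_empty
      simp
    rw [this] at hmem
    exact hmem
  | succ K ih =>
    intro hK h hmem hred
    have hKn : K < n := by omega
    set kf : Fin n := ⟨K, hKn⟩ with hkf
    set jf : Fin n := kf + 1 with hjf
    have hkval : (kf : ℕ) = K := rfl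
    have hjval : (jf : ℕ) = K + 1 := by
      rw [hjf]
      exact val_succ (by omega)
    -- split the ideal
    have hsets : {i : Fin n | (i : ℕ) < K + 1} = {i : Fin n | (i : ℕ) < K} ∪ {kf} := by
      ext i
      constructor
      · intro hi
        rcases Nat.lt_succ_iff_lt_or_eq.mp hi with h' | h'
        · exact Or.inl h'
        · exact Or.inr (Fin.ext (by rw [hkval]; exact h'))
      · rintro (h' | rfl)
        · exact Nat.lt_succ_of_lt h'
        · show (kf : ℕ) < K + 1
          omega
    have hset : g p a '' {i : Fin n | (i : ℕ) < K + 1}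
        = g p a '' {i : Fin n | (i : ℕ) < K} ∪ {g p a kf} := by
      rw [hsets, Set.image_union, Set.image_singleton]
    have hIdeal : Ik p a (K + 1) = Ik p a K ⊔ Ideal.span {g p a kf} := by
      rw [Ik, hset, Ideal.span_union, ← Ik]
    rw [hIdeal] at hmem
    obtain ⟨w, hw, v, hv, rfl⟩ := Submodule.mem_sup.mp hmem
    obtain ⟨q, rfl⟩ := Ideal.mem_span_singleton'.mp hv
    -- normalize
    have hzero : ∀ x ∈ Ik p a K, NFp p a hp K hKn x = 0 := by
      intro x hx
      refine ih hKn _ ?_ (NFp_red p a hp K hKn x)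
      have : NFp p a hp K hKn x = x - (x - NFp p a hp K hKn x) := by ring
      rw [this]
      exact sub_mem hx (NFp_sub_mem p a hp K hKn x)
    set r := NFp p a hp K hKn q with hr
    have hqr : q * g p a kf - r * g p a kf ∈ Ik p a K := by
      rw [← sub_mul]
      exact Ideal.mul_mem_right _ _ (NFp_sub_mem p a hp K hKn q)
    have hredr : Red p K r := NFp_red p a hp K hKn q
    have hgr : r * g p a kf = r * X kf ^ p - C (a (kf + 1)) * (r * X jf) := by
      rw [g]; ring
    have hredrg : Red p K (r * g p a kf) := by
      rw [hgr]
      exact (hredr.mul_X_pow p kf (by omega) p).sub p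
        ((hredr.mul_X p jf (by omega)).C_mul p _)
    have hh : w + q * g p a kf = NFp p a hp K hKn (w + q * g p a kf) := by
      rw [NFp_eq_self p a hp K hKn ((Red.mono p (Nat.le_succ K)) hred)]
    have hsplit : w + q * g p a kf
        = (w + (q * g p a kf - r * g p a kf)) + r * g p a kf := by ring
    have : NFp p a hp K hKn (w + q * g p a kf) = r * g p a kf := by
      rw [hsplit, NFp_add, NFp_add, hzero _ hw,
        hzero _ hqr, NFp_eq_self p a hp K hKn hredrg]
      ring
    rw [hh, this]
    rw [hh, this] at hred
    by_contra hne
    have hrne : r ≠ 0 := fun e => hne (by rw [e, zero_mul])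
    obtain ⟨d, hdk, hdc⟩ := key p hp kf jf (a (kf + 1)) hrne
    rw [← hgr] at hdc
    exact hdc (hred d kf (by omega) hdk)


/-- main regularity step -/
lemma reg (hp : 2 ≤ p) (k : Fin n) (f : MvPolynomial (Fin n) R)
    (hf : g p a k * f ∈ Ik p a (k : ℕ)) : f ∈ Ik p a (k : ℕ) := by
  have hK : (k : ℕ) < n := k.isLt
  set r := NFp p a hp (k : ℕ) hK f with hr
  have h0 : f - r ∈ Ik p a (k : ℕ) := NFp_sub_mem p a hp _ hK f
  have hredr : Red p (k : ℕ) r := NFp_red p a hp _ hK f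
  have hgr : g p a k * r ∈ Ik p a (k : ℕ) := by
    have e : g p a k * r = g p a k * f - g p a k * (f - r) := by ring
    rw [e]
    exact sub_mem hf (Ideal.mul_mem_left _ _ h0)
  suffices hr0 : r = 0 by
    rw [hr0, sub_zero] at h0
    exact h0
  set jf : Fin n := k + 1 with hjf
  have hexp : g p a k * r = r * X k ^ p - C (a jf) * (r * X jf) := by
    rw [g]; ring
  by_cases hjk : (k : ℕ) ≤ (jf : ℕ)
  · -- no wraparound (or `jf = k` when `n = 1`)
    have hred2 : Red p (k : ℕ) (g p a k * r) := by
      rw [hexp]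
      exact (hredr.mul_X_pow p k le_rfl p).sub p ((hredr.mul_X p jf hjk).C_mul p _)
    have hz : g p a k * r = 0 := indep p a hp (k : ℕ) hK _ hgr hred2
    by_contra hne
    obtain ⟨d, _, hdc⟩ := key p hp k jf (a jf) hne
    rw [← hexp, hz] at hdc
    simp at hdc
  · -- wraparound : `(k : ℕ) = n - 1`
    push_neg at hjk
    have hkn1 : (k : ℕ) = n - 1 := by
      by_contra hnk
      have h1 : (k : ℕ) + 1 < n := by omega
      have := val_succ (i := k) h1
      rw [← hjf] at this
      omega
    set s := NFp p a hp (k : ℕ) hK (r * X jf) with hs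
    have hs1 : r * X jf - s ∈ Ik p a (k : ℕ) := NFp_sub_mem p a hp _ hK _
    have hredS : Red p (k : ℕ) s := NFp_red p a hp _ hK _
    have heq : r * X k ^ p - C (a jf) * s ∈ Ik p a (k : ℕ) := by
      have e : r * X k ^ p - C (a jf) * s
          = g p a k * r + C (a jf) * (r * X jf - s) := by rw [g]; ring
      rw [e]
      exact add_mem hgr (Ideal.mul_mem_left _ _ hs1)
    have hredL : Red p (k : ℕ) (r * X k ^ p - C (a jf) * s) :=
      (hredr.mul_X_pow p k le_rfl p).sub p (hredS.C_mul p _)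
    have hEq : r * X k ^ p = C (a jf) * s :=
      sub_eq_zero.mp (indep p a hp (k : ℕ) hK _ heq hredL)
    by_contra hne
    obtain ⟨d0, hd0, hsup⟩ := Finset.exists_mem_eq_sup r.support
      (support_nonempty.mpr hne) (fun d : Fin n →₀ ℕ => d k)
    set δ := r.support.sup (fun d : Fin n →₀ ℕ => d k) with hδ
    set D := d0 + Finsupp.single k p with hD
    have hDk : D k = δ + p := by
      rw [hD, Finsupp.add_apply, Finsupp.single_apply, if_pos rfl, hsup]
    have h1 : coeff D (r * X k ^ p) = coeff d0 r := by
      rw [X_pow_eq_monomial, coeff_mul_monomial', if_pos le_add_self, mul_one,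
        add_tsub_cancel_right]
    have h2 : coeff D (C (a jf) * s) = 0 := by
      have hcoeffs : coeff D s = 0 := by
        rw [hs, NFp, coeff_sum]
        refine Finset.sum_eq_zero fun d hd => ?_
        rw [coeff_C_mul]
        have hd' : coeff d (r * X jf) ≠ 0 := mem_support_iff.mp hd
        rw [coeff_mul_X'] at hd'
        by_cases hmem : jf ∈ d.support
        swap
        · rw [if_neg hmem] at hd'
          exact absurd rfl hd'
        rw [if_pos hmem] at hd'
        set d1 : Fin n →₀ ℕ := d - Finsupp.single jf 1 with hd1def
        have hd1 : d1 ∈ r.support := mem_support_iff.mpr hd'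
        have hjle : Finsupp.single jf 1 ≤ d := by
          rw [Finsupp.single_le_iff]
          have := Finsupp.mem_support_iff.mp hmem
          omega
        have hdd : d = d1 + Finsupp.single jf 1 := by
          rw [hd1def, tsub_add_cancel_of_le hjle]
        have hd1red : ∀ i : Fin n, (i : ℕ) < (k : ℕ) → d1 i < p := by
          intro i hi
          by_contra hge
          exact hd' (hredr d1 i hi (not_lt.mp hge))
        have happ : ∀ x : Fin n, d x = d1 x + (if jf = x then 1 else 0) := by
          intro x
          rw [hdd, Finsupp.add_apply, Finsupp.single_apply]
        have hle2 : ∀ i : Fin n, (i : ℕ) < (k : ℕ) → d i ≤ p := by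
          intro i hi
          rw [happ i]
          have := hd1red i hi
          split_ifs <;> omega
        have hG2 : ∀ i : Fin n, (i : ℕ) < (k : ℕ) → (i : ℕ) ≠ (jf : ℕ) → d i < p := by
          intro i hi hne'
          rw [happ i, if_neg (fun e => hne' (by rw [e]))]
          have := hd1red i hi
          omega
        have hdeg := NFm_deg p a hp (k : ℕ) hK k hkn1 d (jf : ℕ) hle2 hG2
        have hjfk : ¬ (jf = k) := by
          intro e
          apply_fun Fin.val at e
          omega
        have hdk : d k ≤ δ := by
          rw [happ k, if_neg hjfk]
          have : d1 k ≤ δ := by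
            exact Finset.le_sup (f := fun d : Fin n →₀ ℕ => d k) hd1
          omega
        have hnot : D ∉ (NFm p a hp (k : ℕ) hK d).support := by
          intro hmm
          have := hdeg D hmm
          omega
        rw [notMem_support_iff.mp hnot, mul_zero]
      rw [coeff_C_mul, hcoeffs, mul_zero]
    rw [hEq, h2] at h1
    exact (mem_support_iff.mp hd0) h1.symm


lemma ofList_take (K : ℕ) :
    Ideal.ofList ((List.ofFn (g p a)).take K) = Ik p a K := by
  rw [Ik]
  apply congrArg Ideal.span
  ext x
  simp only [Set.mem_setOf_eq, Set.mem_image]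
  constructor
  · intro hx
    obtain ⟨i, hi, hget⟩ := List.mem_iff_getElem.mp hx
    have hi' : i < min K n := by simpa using hi
    refine ⟨⟨i, by omega⟩, by simpa using (by omega : i < K), ?_⟩
    rw [← hget, List.getElem_take, List.getElem_ofFn]
  · rintro ⟨j, hj, rfl⟩
    apply List.mem_iff_getElem.mpr
    refine ⟨(j : ℕ), by simp [hj, j.isLt], ?_⟩
    rw [List.getElem_take, List.getElem_ofFn]

lemma smul_top_eq (J : Ideal (MvPolynomial (Fin n) R)) :
    (J • (⊤ : Submodule (MvPolynomial (Fin n) R) (MvPolynomial (Fin n) R))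
      : Submodule (MvPolynomial (Fin n) R) (MvPolynomial (Fin n) R)) = J := by
  rw [Ideal.smul_eq_mul, Ideal.mul_top]

end

end Stmt11Aux

open Stmt11Aux in
/-- The elements `x_0^p - a_1 x_1, x_1^p - a_2 x_2, …, x_{n-1}^p - a_0 x_0` form a regular
sequence in `R[x_0,…,x_{n-1}]`. -/
theorem stmt11 (R : Type*) [CommRing R] [Nontrivial R] (p n : ℕ) (hp : 2 ≤ p) [NeZero n]
    (a : Fin n → R) :
    RingTheory.Sequence.IsRegular (MvPolynomial (Fin n) R)
      (List.ofFn fun k : Fin n => (X k : MvPolynomial (Fin n) R) ^ p - C (a (k + 1)) * X (k + 1)) := by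
  have hrs : (List.ofFn fun k : Fin n => (X k : MvPolynomial (Fin n) R) ^ p
      - C (a (k + 1)) * X (k + 1)) = List.ofFn (g p a) := rfl
  rw [hrs, RingTheory.Sequence.isRegular_iff]
  constructor
  · rw [RingTheory.Sequence.isWeaklyRegular_iff]
    intro i hlt
    have hin : i < n := by simpa using hlt
    have hget : (List.ofFn (g p a))[i] = g p a ⟨i, hin⟩ := by
      rw [List.getElem_ofFn]
    rw [hget, ofList_take p a i, smul_top_eq]
    intro x y hxy
    obtain ⟨u, rfl⟩ := Submodule.Quotient.mk_surjective _ x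
    obtain ⟨v, rfl⟩ := Submodule.Quotient.mk_surjective _ y
    dsimp only at hxy
    rw [← Submodule.Quotient.mk_smul, ← Submodule.Quotient.mk_smul] at hxy
    rw [Submodule.Quotient.eq] at hxy
    have hmem : g p a ⟨i, hin⟩ * (u - v) ∈ Ik p a i := by
      rw [mul_sub]
      simpa [smul_eq_mul] using hxy
    have := reg p a hp ⟨i, hin⟩ (u - v) hmem
    rw [Submodule.Quotient.eq]
    simpa using this
  · intro hEq
    rw [smul_top_eq] at hEq
    have h1 : (1 : MvPolynomial (Fin n) R) ∈ Ideal.ofList (List.ofFn (g p a)) :=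
      hEq ▸ Submodule.mem_top
    have hker : Ideal.ofList (List.ofFn (g p a))
        ≤ RingHom.ker (eval (fun _ => 0 : Fin n → R)) := by
      apply Ideal.span_le.mpr
      rintro x hx
      obtain ⟨k, rfl⟩ := List.mem_ofFn.mp hx
      have hp0 : p ≠ 0 := by omega
      simp [RingHom.mem_ker, g, zero_pow hp0]
    have := hker h1
    rw [RingHom.mem_ker, map_one] at this
    exact one_ne_zero this
end

section
/- Let R be a commutative ring and 0 → G → F → H → 0 a short exact sequence of finite free R-modules, with rank G = g and rank H = h (so rank F = g + h). Then there is an isomorphism of R-modules Λ^g G ⊗_R Λ^h H → Λ^{g+h} F, defined by sending (x_1 ∧ ⋯ ∧ x_g) ⊗ (y_1 ∧ ⋯ ∧ y_h) to α(x_1) ∧ ⋯ ∧ α(x_g) ∧ ỹ_1 ∧ ⋯ ∧ ỹ_h, where α : G → F is the given injection and ỹ_j ∈ F is any lift of y_j ∈ H; this map is well defined (independent of the chosen lifts) and is an isomorphism. -/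
open TensorProduct

open TensorProduct ExteriorAlgebra

namespace Stmt15Aux

variable {R : Type*} [CommRing R]
variable {M N : Type*} [AddCommGroup M] [AddCommGroup N] [Module R M] [Module R N]

lemma mem_map (f : M →ₗ[R] N) {k : ℕ} {u : ExteriorAlgebra R M} (hu : u ∈ ⋀[R]^k M) :
    ExteriorAlgebra.map f u ∈ ⋀[R]^k N := by
  have h2 : Submodule.map (ExteriorAlgebra.map f).toLinearMap
      (LinearMap.range (ι R (M := M))) ≤ LinearMap.range (ι R (M := N)) := by
    rw [ι_range_map_map]
    rintro _ ⟨y, -, rfl⟩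
    exact LinearMap.mem_range_self _ y
  have h3 : Submodule.map (ExteriorAlgebra.map f).toLinearMap (⋀[R]^k M) ≤ ⋀[R]^k N := by
    rw [Submodule.map_pow]
    exact pow_le_pow_left' h2 k
  exact h3 ⟨u, hu, rfl⟩

lemma ιMulti_append {i j : ℕ} (a : Fin i → M) (b : Fin j → M) :
    ιMulti R (i + j) (Fin.append a b) = ιMulti R i a * ιMulti R j b := by
  rw [ιMulti_apply, ιMulti_apply, ιMulti_apply, ← List.prod_append, ← List.ofFn_fin_append]
  congr 1
  exact congrArg List.ofFn (funext (Fin.addCases (fun l => by simp) (fun r => by simp)))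

lemma altmap_zero_of_lt {n : ℕ} (b : Module.Basis (Fin n) R M) {k : ℕ} (hk : n < k)
    {P : Type*} [AddCommGroup P] [Module R P] (f : M [⋀^Fin k]→ₗ[R] P) : f = 0 := by
  refine Module.Basis.ext_alternating b fun v hv => ?_
  have := Fintype.card_le_of_injective v hv
  simp only [Fintype.card_fin] at this
  omega

lemma ιMulti_zero_of_lt {n : ℕ} (b : Module.Basis (Fin n) R M) {k : ℕ} (hk : n < k)
    (v : Fin k → M) : ιMulti R k v = 0 := by
  rw [altmap_zero_of_lt b hk (ιMulti R k)]
  rfl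

lemma ιMulti_eq_det_smul {n : ℕ} (b : Module.Basis (Fin n) R M) (v : Fin n → M) :
    ιMulti R n v = b.det v • ιMulti R n ⇑b := by
  have key : (ιMulti R n (M := M)) =
      (LinearMap.toSpanSingleton R _ (ιMulti R n ⇑b)).compAlternatingMap b.det := by
    refine Module.Basis.ext_alternating b fun i hi => ?_
    have hbij := (Finite.injective_iff_bijective).1 hi
    let σ : Equiv.Perm (Fin n) := Equiv.ofBijective i hbij
    have hcomp : (fun j => b (i j)) = ⇑b ∘ ⇑σ := rfl
    rw [hcomp, AlternatingMap.map_perm, LinearMap.compAlternatingMap_apply,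
      AlternatingMap.map_perm, Module.Basis.det_self, LinearMap.toSpanSingleton_apply]
    rcases Int.units_eq_one_or (Equiv.Perm.sign σ) with h | h <;>
      simp [h, Units.smul_def]
  simpa using DFunLike.congr_fun key v

noncomputable def detMap {n : ℕ} (b : Module.Basis (Fin n) R M) : ExteriorAlgebra R M →ₗ[R] R :=
  liftAlternating (Function.update (fun _ => 0) n b.det)

lemma detMap_ιMulti {n : ℕ} (b : Module.Basis (Fin n) R M) (v : Fin n → M) :
    detMap b (ιMulti R n v) = b.det v := by
  rw [detMap, liftAlternating_apply_ιMulti, Function.update_self]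

lemma detMap_smul {n : ℕ} (b : Module.Basis (Fin n) R M) {u : ExteriorAlgebra R M}
    (hu : u ∈ ⋀[R]^n M) : detMap b u • ιMulti R n ⇑b = u := by
  have hspan : u ∈ Submodule.span R (Set.range (ιMulti R n (M := M))) := by
    rw [ιMulti_span_fixedDegree]; exact hu
  clear hu
  induction hspan using Submodule.span_induction with
  | mem x hx =>
    obtain ⟨v, rfl⟩ := hx
    rw [detMap_ιMulti, ← ιMulti_eq_det_smul]
  | zero => simp
  | add x y hx hy ihx ihy => rw [map_add, add_smul, ihx, ihy]
  | smul a x hx ih => rw [map_smul, smul_eq_mul, mul_smul, ih]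

lemma exteriorPower_span (n : ℕ) :
    Submodule.span R (Set.range fun v : Fin n → M =>
      (⟨ιMulti R n v, ιMulti_range R n (Set.mem_range_self v)⟩ : ⋀[R]^n M)) = ⊤ := by
  apply Submodule.map_injective_of_injective (Submodule.injective_subtype (⋀[R]^n M))
  rw [Submodule.map_span, Submodule.map_top, Submodule.range_subtype]
  have himg : ((⋀[R]^n M).subtype '' (Set.range fun v : Fin n → M =>
      (⟨ιMulti R n v, ιMulti_range R n (Set.mem_range_self v)⟩ : ⋀[R]^n M)))
      = Set.range (ιMulti R n (M := M)) := by
    ext w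
    constructor
    · rintro ⟨-, ⟨v, rfl⟩, rfl⟩
      exact ⟨v, rfl⟩
    · rintro ⟨v, rfl⟩
      exact ⟨_, ⟨v, rfl⟩, rfl⟩
  rw [himg, ιMulti_span_fixedDegree]

lemma mul_ιMulti_congr (α : M →ₗ[R] N) (k : ℕ) (A : ExteriorAlgebra R N)
    (hA : ∀ z : M, A * ExteriorAlgebra.ι R (α z) = 0)
    (y y' : Fin k → N) (hy : ∀ j, y j - y' j ∈ LinearMap.range α) :
    A * ιMulti R k y = A * ιMulti R k y' := by
  induction k generalizing A with
  | zero => rw [Subsingleton.elim y y']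
  | succ k ih =>
    rw [ιMulti_succ_apply, ιMulti_succ_apply, ← mul_assoc, ← mul_assoc]
    have h0 : A * ι R (y 0) = A * ι R (y' 0) := by
      obtain ⟨z, hz⟩ := hy 0
      have hy0 : y 0 = y' 0 + α z := by rw [hz]; abel
      rw [hy0, map_add, mul_add, hA, add_zero]
    rw [h0]
    refine ih (A * ι R (y' 0)) ?_ _ _ ?_
    · intro z
      have swap : ι R (y' 0) * ι R (α z) = -(ι R (α z) * ι R (y' 0)) :=
        eq_neg_of_add_eq_zero_left (ι_add_mul_swap (y' 0) (α z))
      rw [mul_assoc, swap, mul_neg, ← mul_assoc, hA, zero_mul, neg_zero]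
    · intro j
      exact hy j.succ

lemma top_mul_ι {n : ℕ} [Module.Free R M] [Module.Finite R M]
    (hn : Module.finrank R M = n)
    (α : M →ₗ[R] N) (x : Fin n → M) (z : M) :
    ιMulti R n (⇑α ∘ x) * ι R (α z) = 0 := by
  rcases subsingleton_or_nontrivial R with hR | hR
  · haveI := Module.subsingleton R (ExteriorAlgebra R N)
    exact Subsingleton.elim _ _
  have b := Module.finBasisOfFinrankEq R M hn
  have h1 : ιMulti R n (⇑α ∘ x) = ExteriorAlgebra.map α (ιMulti R n x) :=
    (map_apply_ιMulti α x).symm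
  have h2 : ι R (α z) = ExteriorAlgebra.map α (ι R z) := (map_apply_ι α z).symm
  have h3 : ιMulti R n x * ι R z = ιMulti R (n + 1) (Fin.append x ![z]) := by
    rw [ιMulti_append]
    congr 1
    rw [ιMulti_succ_apply]
    simp [ιMulti_zero_apply, Matrix.vecTail]
  rw [h1, h2, ← map_mul, h3, ιMulti_zero_of_lt b (Nat.lt_succ_self n), map_zero]

variable {G F H : Type*} [AddCommGroup G] [AddCommGroup F] [AddCommGroup H]
  [Module R G] [Module R F] [Module R H]

/-- The multiplication map `Λ^g G ⊗ Λ^h H → Λ^{g+h} F` induced by `α` and a splitting `σ`. -/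
noncomputable def mulMap (α : G →ₗ[R] F) (σ : H →ₗ[R] F) (g h : ℕ) :
    ((⋀[R]^g G) ⊗[R] (⋀[R]^h H)) →ₗ[R] ⋀[R]^(g + h) F :=
  TensorProduct.lift (LinearMap.mk₂ R
    (fun u v => (⟨ExteriorAlgebra.map α u.1 * ExteriorAlgebra.map σ v.1,
      SetLike.mul_mem_graded (mem_map α u.2) (mem_map σ v.2)⟩ : ⋀[R]^(g + h) F))
    (fun u u' v => Subtype.ext (by simp [add_mul]))
    (fun a u v => Subtype.ext (by simp [smul_mul_assoc]))
    (fun u v v' => Subtype.ext (by simp [mul_add]))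
    (fun a u v => Subtype.ext (by simp [mul_smul_comm])))

lemma mulMap_tmul (α : G →ₗ[R] F) (σ : H →ₗ[R] F) (g h : ℕ)
    (u : ⋀[R]^g G) (v : ⋀[R]^h H) :
    (mulMap α σ g h (u ⊗ₜ[R] v) : ExteriorAlgebra R F)
      = ExteriorAlgebra.map α u.1 * ExteriorAlgebra.map σ v.1 := by
  simp [mulMap]

lemma mulMap_ιMulti (α : G →ₗ[R] F) (σ : H →ₗ[R] F) {g h : ℕ}
    (x : Fin g → G) (w : Fin h → H)
    (hx : ιMulti R g x ∈ ⋀[R]^g G) (hw : ιMulti R h w ∈ ⋀[R]^h H) :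
    (mulMap α σ g h (⟨ιMulti R g x, hx⟩ ⊗ₜ[R] ⟨ιMulti R h w, hw⟩) : ExteriorAlgebra R F)
      = ιMulti R (g + h) (Fin.append (⇑α ∘ x) (⇑σ ∘ w)) := by
  rw [mulMap_tmul, map_apply_ιMulti, map_apply_ιMulti, ← ιMulti_append]

end Stmt15Aux

set_option maxHeartbeats 1000000 in
set_option synthInstance.maxHeartbeats 400000 in
open Stmt15Aux ExteriorAlgebra in
/-- For a short exact sequence `0 → G → F → H → 0` of finite free modules with
`rank G = g`, `rank H = h`, there is an isomorphism `Λ^g G ⊗ Λ^h H ≃ Λ^{g+h} F` sending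
`(x_1 ∧ ⋯ ∧ x_g) ⊗ (y_1 ∧ ⋯ ∧ y_h)` to `α(x_1) ∧ ⋯ ∧ α(x_g) ∧ ỹ_1 ∧ ⋯ ∧ ỹ_h`, for any
choice of lifts `ỹ_j ∈ F` of the `y_j ∈ H` (in particular this is independent of the
lifts). -/
theorem stmt15 (R : Type*) [CommRing R]
    (G F H : Type*) [AddCommGroup G] [AddCommGroup F] [AddCommGroup H]
    [Module R G] [Module R F] [Module R H]
    [Module.Free R G] [Module.Free R F] [Module.Free R H]
    [Module.Finite R G] [Module.Finite R F] [Module.Finite R H]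
    (g h : ℕ) (hG : Module.finrank R G = g) (hH : Module.finrank R H = h)
    (α : G →ₗ[R] F) (β : F →ₗ[R] H)
    (hα : Function.Injective α) (hβ : Function.Surjective β)
    (hexact : LinearMap.range α = LinearMap.ker β) :
    ∃ e : ((⋀[R]^g G) ⊗[R] (⋀[R]^h H)) ≃ₗ[R] (⋀[R]^(g + h) F),
      ∀ (x : Fin g → G) (y : Fin h → F)
        (hx : ExteriorAlgebra.ιMulti R g x ∈ ⋀[R]^g G)
        (hy : ExteriorAlgebra.ιMulti R h (β ∘ y) ∈ ⋀[R]^h H)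
        (hxy : ExteriorAlgebra.ιMulti R (g + h) (Fin.append (α ∘ x) y) ∈ ⋀[R]^(g + h) F),
        e (⟨ExteriorAlgebra.ιMulti R g x, hx⟩ ⊗ₜ[R] ⟨ExteriorAlgebra.ιMulti R h (β ∘ y), hy⟩)
          = ⟨ExteriorAlgebra.ιMulti R (g + h) (Fin.append (α ∘ x) y), hxy⟩ := by
  classical
  rcases subsingleton_or_nontrivial R with hR | hR
  · haveI := Module.subsingleton R ((⋀[R]^g G) ⊗[R] (⋀[R]^h H))
    haveI := Module.subsingleton R (↥(⋀[R]^(g + h) F))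
    exact ⟨LinearEquiv.ofSubsingleton _ _, fun _ _ _ _ _ => Subsingleton.elim _ _⟩
  obtain ⟨σ, hσ⟩ := Module.projective_lifting_property β LinearMap.id hβ
  have hσ' : ∀ v : H, β (σ v) = v := fun v => DFunLike.congr_fun hσ v
  set bG := Module.finBasisOfFinrankEq R G hG with hbGdef
  set bH := Module.finBasisOfFinrankEq R H hH with hbHdef
  set φ : (G × H) →ₗ[R] F := α.coprod σ with hφdef
  have hφ : Function.Bijective φ := by
    constructor
    · rw [← LinearMap.ker_eq_bot, Submodule.eq_bot_iff]
      rintro ⟨z, w⟩ hp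
      have h1 : α z + σ w = 0 := hp
      have h2 : β (α z) = 0 := by
        have hm : α z ∈ LinearMap.ker β := by
          rw [← hexact]; exact LinearMap.mem_range_self α z
        exact LinearMap.mem_ker.mp hm
      have h3 : w = 0 := by
        have := congrArg β h1
        simpa [map_add, h2, hσ'] using this
      have h4 : z = 0 := by
        apply hα
        rw [map_zero]
        rwa [h3, map_zero, add_zero] at h1
      simp [h3, h4, Prod.ext_iff]
    · intro f
      have hker : f - σ (β f) ∈ LinearMap.ker β := by
        simp [LinearMap.mem_ker, map_sub, hσ']
      rw [← hexact] at hker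
      obtain ⟨z, hz⟩ := hker
      refine ⟨(z, β f), ?_⟩
      show α z + σ (β f) = f
      rw [hz]; abel
  set Φ : (G × H) ≃ₗ[R] F := LinearEquiv.ofBijective φ hφ with hΦdef
  set bF : Module.Basis (Fin (g + h)) R F := ((bG.prod bH).map Φ).reindex finSumFinEquiv with hbFdef
  have hΦapp : ∀ (z : G) (w : H), Φ (z, w) = α z + σ w := fun z w => rfl
  have hΦsymm_α : ∀ z : G, Φ.symm (α z) = (z, 0) := by
    intro z
    rw [LinearEquiv.symm_apply_eq, hΦapp, map_zero, add_zero]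
  have hΦsymm_σ : ∀ w : H, Φ.symm (σ w) = (0, w) := by
    intro w
    rw [LinearEquiv.symm_apply_eq, hΦapp, map_zero, zero_add]
  have hbF : ⇑bF = Fin.append (⇑α ∘ ⇑bG) (⇑σ ∘ ⇑bH) := by
    funext i
    obtain ⟨s, rfl⟩ := finSumFinEquiv.surjective i
    rcases s with i0 | i0
    · rw [finSumFinEquiv_apply_left, Fin.append_left, hbFdef, Module.Basis.reindex_apply,
        ← finSumFinEquiv_apply_left, Equiv.symm_apply_apply, Module.Basis.map_apply]
      have hp : (bG.prod bH) (Sum.inl i0) = (bG i0, 0) := by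
        rw [Module.Basis.prod_apply]; rfl
      rw [hp, hΦapp, map_zero, add_zero, Function.comp_apply]
    · rw [finSumFinEquiv_apply_right, Fin.append_right, hbFdef, Module.Basis.reindex_apply,
        ← finSumFinEquiv_apply_right, Equiv.symm_apply_apply, Module.Basis.map_apply]
      have hp : (bG.prod bH) (Sum.inr i0) = (0, bH i0) := by
        rw [Module.Basis.prod_apply]; rfl
      rw [hp, hΦapp, map_zero, zero_add, Function.comp_apply]
  have hreprF : ∀ (f : F) (s : Fin g ⊕ Fin h),
      bF.repr f (finSumFinEquiv s) = (bG.prod bH).repr (Φ.symm f) s := by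
    intro f s
    rw [hbFdef, Module.Basis.repr_reindex_apply, Equiv.symm_apply_apply, Module.Basis.map_repr]
    rfl
  have hdet : ∀ (x : Fin g → G) (w : Fin h → H),
      bF.det (Fin.append (⇑α ∘ x) (⇑σ ∘ w)) = bG.det x * bH.det w := by
    intro x w
    rw [Module.Basis.det_apply, Module.Basis.det_apply, Module.Basis.det_apply]
    have hmat : bF.toMatrix (Fin.append (⇑α ∘ x) (⇑σ ∘ w)) =
        Matrix.submatrix (Matrix.fromBlocks (bG.toMatrix x) 0 0 (bH.toMatrix w))
          finSumFinEquiv.symm finSumFinEquiv.symm := by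
      ext i j
      obtain ⟨s, rfl⟩ := finSumFinEquiv.surjective i
      obtain ⟨t, rfl⟩ := finSumFinEquiv.surjective j
      rw [Matrix.submatrix_apply, Equiv.symm_apply_apply, Equiv.symm_apply_apply,
        Module.Basis.toMatrix_apply]
      rcases t with j0 | j0
      · rw [show Fin.append (⇑α ∘ x) (⇑σ ∘ w) (finSumFinEquiv (Sum.inl j0)) = α (x j0) by
          rw [finSumFinEquiv_apply_left, Fin.append_left]; rfl]
        rw [hreprF, hΦsymm_α]
        rcases s with i0 | i0
        · simp [Module.Basis.prod_repr_inl, Module.Basis.toMatrix_apply]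
        · simp [Module.Basis.prod_repr_inr]
      · rw [show Fin.append (⇑α ∘ x) (⇑σ ∘ w) (finSumFinEquiv (Sum.inr j0)) = σ (w j0) by
          rw [finSumFinEquiv_apply_right, Fin.append_right]; rfl]
        rw [hreprF, hΦsymm_σ]
        rcases s with i0 | i0
        · simp [Module.Basis.prod_repr_inl]
        · simp [Module.Basis.prod_repr_inr, Module.Basis.toMatrix_apply]
    rw [hmat, Matrix.det_submatrix_equiv_self, Matrix.det_fromBlocks_zero₂₁,
      ← Module.Basis.det_apply, ← Module.Basis.det_apply]
  have memG : ∀ x : Fin g → G, ιMulti R g x ∈ ⋀[R]^g G :=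
    fun x => ιMulti_range R g (Set.mem_range_self x)
  have memH : ∀ w : Fin h → H, ιMulti R h w ∈ ⋀[R]^h H :=
    fun w => ιMulti_range R h (Set.mem_range_self w)
  set ωG : (⋀[R]^g G) := ⟨ιMulti R g ⇑bG, memG ⇑bG⟩ with hωGdef
  set ωH : (⋀[R]^h H) := ⟨ιMulti R h ⇑bH, memH ⇑bH⟩ with hωHdef
  set μ := mulMap α σ g h with hμdef
  set ν : (⋀[R]^(g + h) F) →ₗ[R] ((⋀[R]^g G) ⊗[R] (⋀[R]^h H)) :=
    (LinearMap.toSpanSingleton R _ (ωG ⊗ₜ[R] ωH)) ∘ₗ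
      ((detMap bF) ∘ₗ (Submodule.subtype (⋀[R]^(g + h) F))) with hνdef
  have hν : ∀ u : (⋀[R]^(g + h) F), ν u = detMap bF u.1 • (ωG ⊗ₜ[R] ωH) := fun u => rfl
  have hμν : ∀ u, μ (ν u) = u := by
    intro u
    rw [hν, map_smul]
    refine Subtype.ext ?_
    rw [Submodule.coe_smul]
    rw [show ((μ (ωG ⊗ₜ[R] ωH) : (⋀[R]^(g + h) F)) : ExteriorAlgebra R F)
        = ιMulti R (g + h) (Fin.append (⇑α ∘ ⇑bG) (⇑σ ∘ ⇑bH)) from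
      mulMap_ιMulti α σ ⇑bG ⇑bH (memG ⇑bG) (memH ⇑bH)]
    rw [← hbF]
    exact detMap_smul bF u.2
  have hνμ : ∀ t, ν (μ t) = t := by
    intro t
    induction t with
    | zero => rw [map_zero, map_zero]
    | add a b iha ihb => rw [map_add, map_add, iha, ihb]
    | tmul u v =>
      have hu : u ∈ Submodule.span R (Set.range fun x : Fin g → G =>
          (⟨ιMulti R g x, memG x⟩ : ⋀[R]^g G)) := by
        rw [exteriorPower_span]; exact Submodule.mem_top
      induction hu using Submodule.span_induction with
      | mem u hu =>
        obtain ⟨x, rfl⟩ := hu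
        have hv : v ∈ Submodule.span R (Set.range fun w : Fin h → H =>
            (⟨ιMulti R h w, memH w⟩ : ⋀[R]^h H)) := by
          rw [exteriorPower_span]; exact Submodule.mem_top
        induction hv using Submodule.span_induction with
        | mem v hv =>
          obtain ⟨w, rfl⟩ := hv
          have h1 : ((μ (⟨ιMulti R g x, memG x⟩ ⊗ₜ[R] ⟨ιMulti R h w, memH w⟩) :
                (⋀[R]^(g + h) F)) : ExteriorAlgebra R F)
              = ιMulti R (g + h) (Fin.append (⇑α ∘ x) (⇑σ ∘ w)) :=
            mulMap_ιMulti α σ x w (memG x) (memH w)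
          have h2 : (⟨ιMulti R g x, memG x⟩ : ⋀[R]^g G) = bG.det x • ωG := by
            refine Subtype.ext ?_
            rw [Submodule.coe_smul]
            exact ιMulti_eq_det_smul bG x
          have h3 : (⟨ιMulti R h w, memH w⟩ : ⋀[R]^h H) = bH.det w • ωH := by
            refine Subtype.ext ?_
            rw [Submodule.coe_smul]
            exact ιMulti_eq_det_smul bH w
          rw [hν]
          rw [show detMap bF ((μ (⟨ιMulti R g x, memG x⟩ ⊗ₜ[R] ⟨ιMulti R h w, memH w⟩) :
                (⋀[R]^(g + h) F)) : ExteriorAlgebra R F) = bG.det x * bH.det w by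
            rw [h1, detMap_ιMulti, hdet]]
          beta_reduce
          rw [h2, h3, TensorProduct.smul_tmul_smul]
        | zero => rw [TensorProduct.tmul_zero, map_zero, map_zero]
        | add v1 v2 hv1 hv2 ih1 ih2 => rw [TensorProduct.tmul_add, map_add, map_add, ih1, ih2]
        | smul a v1 hv1 ih => rw [TensorProduct.tmul_smul, map_smul, map_smul, ih]
      | zero => rw [TensorProduct.zero_tmul, map_zero, map_zero]
      | add u1 u2 hu1 hu2 ih1 ih2 => rw [TensorProduct.add_tmul, map_add, map_add, ih1, ih2]
      | smul a u1 hu1 ih =>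
        rw [← TensorProduct.smul_tmul', map_smul, map_smul, ih]
  refine ⟨LinearEquiv.ofLinear μ ν (LinearMap.ext hμν) (LinearMap.ext hνμ), ?_⟩
  intro x y hx hy hxy
  rw [LinearEquiv.ofLinear_apply]
  refine Subtype.ext ?_
  rw [show ((μ (⟨ιMulti R g x, hx⟩ ⊗ₜ[R] ⟨ιMulti R h (β ∘ y), hy⟩) :
        (⋀[R]^(g + h) F)) : ExteriorAlgebra R F)
      = ιMulti R (g + h) (Fin.append (⇑α ∘ x) (⇑σ ∘ (⇑β ∘ y))) from
    mulMap_ιMulti α σ x (⇑β ∘ y) hx hy]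
  show ιMulti R (g + h) (Fin.append (⇑α ∘ x) (⇑σ ∘ (⇑β ∘ y)))
      = ιMulti R (g + h) (Fin.append (⇑α ∘ x) y)
  rw [ιMulti_append, ιMulti_append]
  refine mul_ιMulti_congr α h (ιMulti R g (⇑α ∘ x)) ?_ (⇑σ ∘ (⇑β ∘ y)) y ?_
  · intro z
    exact top_mul_ι hG α x z
  · intro j
    rw [hexact]
    simp [LinearMap.mem_ker, map_sub, hσ']
end
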